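/- arXiv:1803.01665 — 8 statements merged into one kernel-verified Lean document; each statement's English description precedes it below -/
import Mathlib

section
/- For all real numbers a and b with a < b, the ratio Φ(a − θ)/Φ(b − θ) tends to 0 as θ → ∞. -/
open Filter

/-- The standard normal cumulative distribution function
`Φ(x) = ∫_{−∞}^x (2π)^{−1/2} exp(−t²/2) dt`. -/
noncomputable def stdNormalCDF (x : ℝ) : ℝ :=
  ∫ t in Set.Iic x, (Real.sqrt (2 * Real.pi))⁻¹ * Real.exp (-(t ^ 2) / 2)

open MeasureTheory Real Set

lemma gauss_integrable :
    Integrable (fun t : ℝ => (Real.sqrt (2 * Real.pi))⁻¹ * Real.exp (-(t ^ 2) / 2)) := by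
  have h : Integrable (fun t : ℝ => Real.exp (-(1/2 : ℝ) * t ^ 2)) :=
    integrable_exp_neg_mul_sq (by norm_num)
  have : (fun t : ℝ => (Real.sqrt (2 * Real.pi))⁻¹ * Real.exp (-(t ^ 2) / 2))
      = fun t : ℝ => (Real.sqrt (2 * Real.pi))⁻¹ * Real.exp (-(1/2 : ℝ) * t ^ 2) := by
    funext t; ring_nf
  rw [this]
  exact h.const_mul _

lemma stdNormalCDF_pos (x : ℝ) : 0 < stdNormalCDF x := by
  unfold stdNormalCDF
  have hpos : ∀ t : ℝ, 0 < (Real.sqrt (2 * Real.pi))⁻¹ * Real.exp (-(t ^ 2) / 2) := by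
    intro t
    have : 0 < Real.sqrt (2 * Real.pi) :=
      Real.sqrt_pos.2 (by positivity)
    positivity
  rw [setIntegral_pos_iff_support_of_nonneg_ae]
  · have : (Function.support fun t : ℝ => (Real.sqrt (2 * Real.pi))⁻¹ * Real.exp (-(t ^ 2) / 2))
        = Set.univ := by
      ext t; simpa using (hpos t).ne'
    rw [this, Set.univ_inter]
    simp [Real.volume_Iic]
  · exact Filter.Eventually.of_forall fun t => (hpos t).le
  · exact gauss_integrable.integrableOn

lemma stdNormalCDF_shift_le (a b θ : ℝ) (hab : a < b) :
    stdNormalCDF (a - θ) ≤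
      Real.exp ((b - a) * (b - θ) - (b - a) ^ 2 / 2) * stdNormalCDF (b - θ) := by
  set d := b - a with hd
  have hd0 : 0 < d := by simp [hd]; linarith
  set f : ℝ → ℝ := fun t => (Real.sqrt (2 * Real.pi))⁻¹ * Real.exp (-(t ^ 2) / 2) with hf
  -- translate
  have hshift : stdNormalCDF (a - θ) = ∫ t in Set.Iic (b - θ), f (t - d) := by
    unfold stdNormalCDF
    have := (measurePreserving_sub_right (volume : Measure ℝ) d).setIntegral_preimage_emb
      (MeasurableEquiv.subRight d).measurableEmbedding f (Set.Iic (a - θ))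
    have hpre : ((fun x : ℝ => x - d) ⁻¹' Set.Iic (a - θ)) = Set.Iic (b - θ) := by
      ext x
      simp only [Set.mem_preimage, Set.mem_Iic, hd]
      constructor <;> intro <;> linarith
    rw [hpre] at this
    exact this.symm
  rw [hshift]
  unfold stdNormalCDF
  rw [← MeasureTheory.integral_const_mul]
  have hK : ∀ t ∈ Set.Iic (b - θ), f (t - d) ≤ Real.exp (d * (b - θ) - d ^ 2 / 2) * f t := by
    intro t ht
    simp only [Set.mem_Iic] at ht
    have : f (t - d) = Real.exp (d * t - d ^ 2 / 2) * f t := by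
      simp only [hf]
      have key : Real.exp (d * t - d ^ 2 / 2) * Real.exp (-(t ^ 2) / 2)
          = Real.exp (-((t - d) ^ 2) / 2) := by
        rw [← Real.exp_add]; congr 1; ring
      rw [← key]; ring
    rw [this]
    have h1 : Real.exp (d * t - d ^ 2 / 2) ≤ Real.exp (d * (b - θ) - d ^ 2 / 2) := by
      apply Real.exp_le_exp.2
      nlinarith
    have h2 : 0 ≤ f t := by
      have : 0 ≤ Real.sqrt (2 * Real.pi) := Real.sqrt_nonneg _
      simp only [hf]; positivity
    exact mul_le_mul_of_nonneg_right h1 h2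
  apply MeasureTheory.setIntegral_mono_on
  · have : Integrable (fun t : ℝ => f (t - d)) := gauss_integrable.comp_sub_right d
    exact this.integrableOn
  · exact (gauss_integrable.const_mul _).integrableOn
  · exact measurableSet_Iic
  · exact hK

/-- For all real `a < b`, the ratio `Φ(a − θ)/Φ(b − θ)` tends to `0` as `θ → ∞`. -/
theorem stmt_0 (a b : ℝ) (hab : a < b) :
    Tendsto (fun θ : ℝ => stdNormalCDF (a - θ) / stdNormalCDF (b - θ)) atTop (nhds 0) := by
  have hK : Tendsto (fun θ : ℝ => Real.exp ((b - a) * (b - θ) - (b - a) ^ 2 / 2)) atTop (nhds 0) := by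
    apply Real.tendsto_exp_atBot.comp
    apply Filter.tendsto_atBot_add_const_right
    apply Tendsto.const_mul_atBot (by linarith : (0:ℝ) < b - a)
    have h1 : Tendsto (fun θ : ℝ => b + -θ) atTop atBot :=
      tendsto_atBot_add_const_left atTop b tendsto_neg_atTop_atBot
    exact h1.congr (fun x => by ring)
  apply squeeze_zero (fun θ => div_nonneg (stdNormalCDF_pos _).le (stdNormalCDF_pos _).le)
    (fun θ => ?_) hK
  rw [div_le_iff₀ (stdNormalCDF_pos _)]
  exact stdNormalCDF_shift_le a b θ hab
end

section
/- For each fixed w ∈ T, the map θ ↦ F^T_{θ,ς²}(w) is continuous and strictly decreasing on ℝ. -/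
open Filter MeasureTheory ProbabilityTheory Set
open scoped NNReal ENNReal

/-- The cdf of the normal distribution with mean `θ` and variance `ς²`, truncated to the
set `T`: `F^T_{θ,ς²}(w) = P(V ≤ w ∧ V ∈ T) / P(V ∈ T)` for `V ~ N(θ, ς²)`. -/
noncomputable def truncNormalCDF (ς : ℝ) (T : Set ℝ) (θ w : ℝ) : ℝ :=
  ((gaussianReal θ (Real.toNNReal (ς ^ 2))) (Set.Iic w ∩ T)).toReal /
    ((gaussianReal θ (Real.toNNReal (ς ^ 2))) T).toReal

namespace TruncAux

lemma toReal_gaussianReal (θ : ℝ) {v : ℝ≥0} (hv : v ≠ 0) (s : Set ℝ) :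
    ((gaussianReal θ v) s).toReal = ∫ x in s, gaussianPDFReal θ v x := by
  rw [gaussianReal_apply_eq_integral θ hv s,
    ENNReal.toReal_ofReal (integral_nonneg fun x => gaussianPDFReal_nonneg _ _ _)]

lemma continuous_pdf_param {v : ℝ≥0} (hv : v ≠ 0) (x : ℝ) :
    Continuous (fun θ : ℝ => gaussianPDFReal θ v x) := by
  simp only [gaussianPDFReal]
  fun_prop

lemma pdf_le_bound {v : ℝ≥0} (hv : v ≠ 0) (θ0 θ x : ℝ) (hθ : |θ - θ0| ≤ 1) :
    gaussianPDFReal θ v x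
      ≤ (Real.sqrt (2 * Real.pi * ((2 * v : ℝ≥0) : ℝ)) * (Real.sqrt (2 * Real.pi * v))⁻¹ *
          Real.exp (1 / (2 * (v : ℝ)))) * gaussianPDFReal θ0 (2 * v) x := by
  have hvr : (0 : ℝ) < v := by positivity
  have h2 : ((2 * v : ℝ≥0) : ℝ) = 2 * (v : ℝ) := by push_cast; ring
  simp only [gaussianPDFReal, h2]
  have hs1 : (0 : ℝ) < Real.sqrt (2 * Real.pi * (v : ℝ)) :=
    Real.sqrt_pos.mpr (by positivity)
  have hs2 : (0 : ℝ) < Real.sqrt (2 * Real.pi * (2 * (v : ℝ))) :=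
    Real.sqrt_pos.mpr (by positivity)
  have hsq : (θ - θ0) ^ 2 ≤ 1 := by
    have := abs_le.mp hθ
    nlinarith
  have key : Real.exp (-(x - θ) ^ 2 / (2 * (v : ℝ)))
      ≤ Real.exp (1 / (2 * (v : ℝ))) * Real.exp (-(x - θ0) ^ 2 / (2 * (2 * (v : ℝ)))) := by
    rw [← Real.exp_add, Real.exp_le_exp]
    have heq : 1 / (2 * (v : ℝ)) + -(x - θ0) ^ 2 / (2 * (2 * (v : ℝ)))
        - (-(x - θ) ^ 2 / (2 * (v : ℝ)))
        = (2 + 2 * (x - θ) ^ 2 - (x - θ0) ^ 2) / (4 * (v : ℝ)) := by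
      field_simp
      ring
    have h0 : 0 ≤ (2 + 2 * (x - θ) ^ 2 - (x - θ0) ^ 2) / (4 * (v : ℝ)) := by
      apply div_nonneg _ (by positivity)
      nlinarith [sq_nonneg (x - θ - (θ - θ0)), hsq]
    linarith [h0, heq]
  calc (Real.sqrt (2 * Real.pi * (v : ℝ)))⁻¹ * Real.exp (-(x - θ) ^ 2 / (2 * (v : ℝ)))
      ≤ (Real.sqrt (2 * Real.pi * (v : ℝ)))⁻¹ *
        (Real.exp (1 / (2 * (v : ℝ))) * Real.exp (-(x - θ0) ^ 2 / (2 * (2 * (v : ℝ))))) :=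
        mul_le_mul_of_nonneg_left key (by positivity)
    _ = Real.sqrt (2 * Real.pi * (2 * (v : ℝ))) * (Real.sqrt (2 * Real.pi * (v : ℝ)))⁻¹ *
        Real.exp (1 / (2 * (v : ℝ))) *
        ((Real.sqrt (2 * Real.pi * (2 * (v : ℝ))))⁻¹ * Real.exp (-(x - θ0) ^ 2 / (2 * (2 * (v : ℝ))))) := by
        field_simp

lemma continuous_setIntegral_pdf {v : ℝ≥0} (hv : v ≠ 0) (s : Set ℝ) :
    Continuous (fun θ : ℝ => ∫ x in s, gaussianPDFReal θ v x) := by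
  rw [continuous_iff_continuousAt]
  intro θ0
  have h2v : (2 * v : ℝ≥0) ≠ 0 := by simp [hv]
  refine continuousAt_of_dominated
    (bound := fun x => (Real.sqrt (2 * Real.pi * ((2 * v : ℝ≥0) : ℝ)) *
      (Real.sqrt (2 * Real.pi * v))⁻¹ * Real.exp (1 / (2 * (v : ℝ)))) *
      gaussianPDFReal θ0 (2 * v) x)
    (Eventually.of_forall fun θ =>
      ((measurable_gaussianPDFReal θ v).aestronglyMeasurable).restrict)
    ?_ ?_ ?_
  · refine eventually_of_mem (Metric.closedBall_mem_nhds θ0 one_pos) fun θ hθ => ?_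
    refine ae_of_all _ fun x => ?_
    rw [Real.norm_of_nonneg (gaussianPDFReal_nonneg _ _ _)]
    exact pdf_le_bound hv θ0 θ x (by simpa [Real.dist_eq] using hθ)
  · exact ((integrable_gaussianPDFReal θ0 (2 * v)).const_mul _).restrict
  · exact ae_of_all _ fun x => (continuous_pdf_param hv x).continuousAt

lemma setIntegral_pdf_pos (θ : ℝ) {v : ℝ≥0} (hv : v ≠ 0) {s : Set ℝ}
    (hs0 : 0 < volume s) : 0 < ∫ x in s, gaussianPDFReal θ v x := by
  rw [setIntegral_pos_iff_support_of_nonneg_ae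
    (ae_of_all _ fun x => gaussianPDFReal_nonneg θ v x)
    ((integrable_gaussianPDFReal θ v).restrict)]
  refine lt_of_lt_of_le hs0 (measure_mono fun x hx => ⟨?_, hx⟩)
  exact ne_of_gt (gaussianPDFReal_pos _ _ _ hv)

lemma pdf_ratio {θ1 θ2 : ℝ} {v : ℝ≥0} (hv : v ≠ 0) (x : ℝ) :
    gaussianPDFReal θ2 v x
      = Real.exp ((θ2 - θ1) * (2 * x - θ1 - θ2) / (2 * (v : ℝ))) * gaussianPDFReal θ1 v x := by
  have hvr : (0 : ℝ) < v := by positivity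
  simp only [gaussianPDFReal]
  rw [mul_left_comm, ← Real.exp_add]
  congr 2
  field_simp
  ring

end TruncAux

/-- For each fixed `w ∈ T`, the map `θ ↦ F^T_{θ,ς²}(w)` is continuous and strictly
decreasing on `ℝ`.  Here `T = ⋃_{i<K} (a i, b i)` is a nonempty union of finitely many
open intervals with (possibly infinite) ordered endpoints. -/
theorem stmt_1 (ς : ℝ) (hς : 0 < ς) (K : ℕ) (hK : 1 ≤ K) (a b : ℕ → EReal)
    (hab : ∀ i < K, a i < b i) (hba : ∀ i, i + 1 < K → b i < a (i + 1))
    (T : Set ℝ)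
    (hT : T = ⋃ i ∈ Finset.range K, {x : ℝ | a i < (x : EReal) ∧ (x : EReal) < b i})
    (w : ℝ) (hw : w ∈ T) :
    Continuous (fun θ : ℝ => truncNormalCDF ς T θ w) ∧
      StrictAnti (fun θ : ℝ => truncNormalCDF ς T θ w) := by
  set v : ℝ≥0 := Real.toNNReal (ς ^ 2) with hv_def
  have hv : v ≠ 0 := by
    simp only [hv_def, ne_eq, Real.toNNReal_eq_zero, not_le]
    positivity
  have hvr : (0 : ℝ) < v := by positivity
  -- T is open
  have hT_open : IsOpen T := by
    rw [hT]
    refine isOpen_biUnion fun i _ => ?_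
    have heq : {x : ℝ | a i < (x : EReal) ∧ (x : EReal) < b i}
        = ((↑) : ℝ → EReal) ⁻¹' (Set.Ioi (a i) ∩ Set.Iio (b i)) := rfl
    rw [heq]
    exact (isOpen_Ioi.inter isOpen_Iio).preimage continuous_coe_real_ereal
  obtain ⟨ε, hε, hball⟩ := Metric.isOpen_iff.mp hT_open w hw
  rw [Real.ball_eq_Ioo] at hball
  set A : Set ℝ := Set.Iic w ∩ T with hA_def
  set B : Set ℝ := T \ Set.Iic w with hB_def
  have hAm : MeasurableSet A := measurableSet_Iic.inter hT_open.measurableSet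
  have hBm : MeasurableSet B := hT_open.measurableSet.diff measurableSet_Iic
  have hA_pos : 0 < volume A := by
    refine lt_of_lt_of_le ?_ (measure_mono (show Set.Ioo (w - ε) w ⊆ A from ?_))
    · rw [Real.volume_Ioo]
      exact ENNReal.ofReal_pos.mpr (by linarith)
    · intro x hx
      exact ⟨le_of_lt hx.2, hball ⟨hx.1, by linarith [hx.2]⟩⟩
  have hB_pos : 0 < volume B := by
    refine lt_of_lt_of_le ?_ (measure_mono (show Set.Ioo w (w + ε) ⊆ B from ?_))
    · rw [Real.volume_Ioo]
      exact ENNReal.ofReal_pos.mpr (by linarith)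
    · intro x hx
      exact ⟨hball ⟨by linarith [hx.1], hx.2⟩, not_le.mpr hx.1⟩
  have hdisj : Disjoint A B := by
    rw [Set.disjoint_left]
    rintro x ⟨hx1, -⟩ ⟨-, hx2⟩
    exact hx2 hx1
  have hunion : A ∪ B = T := by
    rw [hA_def, hB_def, inter_comm]
    exact Set.inter_union_diff T (Set.Iic w)
  have hsplit : ∀ θ : ℝ, ∫ x in T, gaussianPDFReal θ v x
      = (∫ x in A, gaussianPDFReal θ v x) + ∫ x in B, gaussianPDFReal θ v x := by
    intro θ
    rw [← setIntegral_union hdisj hBm ((integrable_gaussianPDFReal θ v).integrableOn)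
      ((integrable_gaussianPDFReal θ v).integrableOn), hunion]
  have hApos : ∀ θ : ℝ, 0 < ∫ x in A, gaussianPDFReal θ v x :=
    fun θ => TruncAux.setIntegral_pdf_pos θ hv hA_pos
  have hBpos : ∀ θ : ℝ, 0 < ∫ x in B, gaussianPDFReal θ v x :=
    fun θ => TruncAux.setIntegral_pdf_pos θ hv hB_pos
  have hFeq : ∀ θ : ℝ, truncNormalCDF ς T θ w
      = (∫ x in A, gaussianPDFReal θ v x)
        / ((∫ x in A, gaussianPDFReal θ v x) + ∫ x in B, gaussianPDFReal θ v x) := by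
    intro θ
    rw [truncNormalCDF, ← hv_def, TruncAux.toReal_gaussianReal θ hv,
      TruncAux.toReal_gaussianReal θ hv, hsplit θ]
  constructor
  · have hc : Continuous (fun θ : ℝ =>
        (∫ x in A, gaussianPDFReal θ v x)
          / ((∫ x in A, gaussianPDFReal θ v x) + ∫ x in B, gaussianPDFReal θ v x)) := by
      refine (TruncAux.continuous_setIntegral_pdf hv A).div
        ((TruncAux.continuous_setIntegral_pdf hv A).add
          (TruncAux.continuous_setIntegral_pdf hv B)) fun θ => ?_
      exact ne_of_gt (by linarith [hApos θ, hBpos θ])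
    exact hc.congr fun θ => (hFeq θ).symm
  · intro θ1 θ2 h12
    set r : ℝ → ℝ := fun x => Real.exp ((θ2 - θ1) * (2 * x - θ1 - θ2) / (2 * (v : ℝ)))
      with hr_def
    have hr_mono : ∀ x y : ℝ, x ≤ y → r x ≤ r y := by
      intro x y hxy
      rw [hr_def]
      apply Real.exp_le_exp.mpr
      apply div_le_div_of_nonneg_right _ (by positivity)
      exact mul_le_mul_of_nonneg_left (by linarith) (by linarith)
    have hr_strict : ∀ x y : ℝ, x < y → r x < r y := by
      intro x y hxy
      rw [hr_def]
      apply Real.exp_lt_exp.mpr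
      apply div_lt_div_of_pos_right _ (by positivity)
      exact mul_lt_mul_of_pos_left (by linarith) (by linarith)
    set α1 := ∫ x in A, gaussianPDFReal θ1 v x with hα1
    set α2 := ∫ x in A, gaussianPDFReal θ2 v x with hα2
    set β1 := ∫ x in B, gaussianPDFReal θ1 v x with hβ1
    set β2 := ∫ x in B, gaussianPDFReal θ2 v x with hβ2
    have h1 : α2 ≤ r w * α1 := by
      rw [hα2, hα1, ← integral_const_mul]
      refine setIntegral_mono_on ((integrable_gaussianPDFReal θ2 v).integrableOn)
        (((integrable_gaussianPDFReal θ1 v).const_mul _).integrableOn) hAm fun x hx => ?_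
      rw [TruncAux.pdf_ratio (θ1 := θ1) hv x]
      exact mul_le_mul_of_nonneg_right (hr_mono x w hx.1) (gaussianPDFReal_nonneg _ _ _)
    have h2 : r w * β1 < β2 := by
      have hint2 : IntegrableOn (fun x => gaussianPDFReal θ2 v x) B volume :=
        (integrable_gaussianPDFReal θ2 v).integrableOn
      have hint1 : IntegrableOn (fun x => r w * gaussianPDFReal θ1 v x) B volume :=
        ((integrable_gaussianPDFReal θ1 v).const_mul _).integrableOn
      have hsub : 0 < ∫ x in B, (gaussianPDFReal θ2 v x - r w * gaussianPDFReal θ1 v x) := by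
        have hposB : ∀ x ∈ B, 0 < gaussianPDFReal θ2 v x - r w * gaussianPDFReal θ1 v x := by
          intro x hx
          have hwx : w < x := not_le.mp hx.2
          rw [TruncAux.pdf_ratio (θ1 := θ1) hv x, ← sub_mul]
          exact mul_pos (sub_pos.mpr (hr_strict w x hwx)) (gaussianPDFReal_pos _ _ _ hv)
        rw [setIntegral_pos_iff_support_of_nonneg_ae
          ((ae_restrict_iff' hBm).mpr (ae_of_all _ fun x hx => le_of_lt (hposB x hx)))
          (hint2.sub hint1)]
        refine lt_of_lt_of_le hB_pos (measure_mono fun x hx => ⟨ne_of_gt (hposB x hx), hx⟩)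
      rw [integral_sub hint2 hint1, integral_const_mul] at hsub
      rw [hβ1, hβ2]
      linarith
    have hcross : α2 * β1 < α1 * β2 := by
      calc α2 * β1 ≤ (r w * α1) * β1 :=
            mul_le_mul_of_nonneg_right h1 (le_of_lt (hBpos θ1))
        _ = α1 * (r w * β1) := by ring
        _ < α1 * β2 := mul_lt_mul_of_pos_left h2 (hApos θ1)
    show truncNormalCDF ς T θ2 w < truncNormalCDF ς T θ1 w
    rw [hFeq θ1, hFeq θ2, ← hα1, ← hα2, ← hβ1, ← hβ2,
      div_lt_div_iff₀ (by linarith [hApos θ2, hBpos θ2]) (by linarith [hApos θ1, hBpos θ1])]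
    nlinarith [hApos θ1, hApos θ2, hBpos θ1, hBpos θ2]
end

section
/- For each fixed w ∈ T, F^T_{θ,ς²}(w) → 1 as θ → −∞ and F^T_{θ,ς²}(w) → 0 as θ → ∞. -/
open Filter MeasureTheory ProbabilityTheory Set
open scoped NNReal ENNReal

lemma pdf_shift {v : ℝ≥0} (hv : (v:ℝ) ≠ 0) (θ x : ℝ) :
    gaussianPDFReal θ v x
      = Real.exp (θ*x/(v:ℝ) - θ^2/(2*(v:ℝ))) * gaussianPDFReal 0 v x := by
  simp only [gaussianPDFReal, sub_zero]
  rw [mul_left_comm, ← Real.exp_add]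
  congr 2
  field_simp
  ring

lemma gauss_tilt_le {v : ℝ≥0} (hv : v ≠ 0) {θ t : ℝ} {A : Set ℝ}
    (hA : ∀ x ∈ A, θ*x ≤ θ*t) :
    gaussianReal θ v A
      ≤ ENNReal.ofReal (Real.exp (θ*t/(v:ℝ) - θ^2/(2*(v:ℝ)))) * gaussianReal 0 v A := by
  have hv' : (0:ℝ) < (v:ℝ) := NNReal.coe_pos.mpr (pos_iff_ne_zero.mpr hv)
  rw [gaussianReal_apply θ hv, gaussianReal_apply 0 hv, ← lintegral_const_mul _ (measurable_gaussianPDF 0 v)]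
  refine setLIntegral_mono ((measurable_gaussianPDF 0 v).const_mul _) fun x hx => ?_
  simp only [gaussianPDF]
  rw [pdf_shift hv'.ne' θ x, ENNReal.ofReal_mul (Real.exp_nonneg _)]
  exact mul_le_mul_left (ENNReal.ofReal_le_ofReal (Real.exp_le_exp.mpr
    (sub_le_sub_right ((div_le_div_iff_of_pos_right hv').mpr (hA x hx)) _))) _

lemma gauss_tilt_ge {v : ℝ≥0} (hv : v ≠ 0) {θ t : ℝ} {A : Set ℝ}
    (hA : ∀ x ∈ A, θ*t ≤ θ*x) :
    ENNReal.ofReal (Real.exp (θ*t/(v:ℝ) - θ^2/(2*(v:ℝ)))) * gaussianReal 0 v A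
      ≤ gaussianReal θ v A := by
  have hv' : (0:ℝ) < (v:ℝ) := NNReal.coe_pos.mpr (pos_iff_ne_zero.mpr hv)
  rw [gaussianReal_apply θ hv, gaussianReal_apply 0 hv, ← lintegral_const_mul _ (measurable_gaussianPDF 0 v)]
  refine setLIntegral_mono (measurable_gaussianPDF θ v) fun x hx => ?_
  simp only [gaussianPDF]
  rw [pdf_shift hv'.ne' θ x, ENNReal.ofReal_mul (Real.exp_nonneg _)]
  exact mul_le_mul_left (ENNReal.ofReal_le_ofReal (Real.exp_le_exp.mpr
    (sub_le_sub_right ((div_le_div_iff_of_pos_right hv').mpr (hA x hx)) _))) _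

lemma gauss_pos {v : ℝ≥0} (hv : v ≠ 0) (θ : ℝ) {c d : ℝ} (h : c < d) :
    0 < gaussianReal θ v (Ioo c d) := by
  rw [pos_iff_ne_zero]
  intro h0
  rw [gaussianReal_apply θ hv, lintegral_eq_zero_iff (measurable_gaussianPDF θ v)] at h0
  have h1 : {x : ℝ | ¬ gaussianPDF θ v x = 0} = univ :=
    eq_univ_of_forall fun x => (gaussianPDF_pos θ hv x).ne'
  have h2 := h0
  rw [Filter.EventuallyEq, ae_iff] at h2
  simp only [Pi.zero_apply] at h2
  rw [h1, Measure.restrict_apply_univ, Real.volume_Ioo] at h2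
  simp only [ENNReal.ofReal_eq_zero] at h2
  linarith

lemma toReal_mul_ofReal_le {r : ℝ} (hr : 0 ≤ r) {m n : ℝ≥0∞} (hn : n ≠ ⊤)
    (h : m ≤ ENNReal.ofReal r * n) : m.toReal ≤ r * n.toReal := by
  have he : (ENNReal.ofReal r * n).toReal = r * n.toReal := by
    rw [ENNReal.toReal_mul, ENNReal.toReal_ofReal hr]
  rw [← he]
  exact (ENNReal.toReal_le_toReal
    (h.trans_lt (ENNReal.mul_lt_top ENNReal.ofReal_lt_top hn.lt_top)).ne
    (ENNReal.mul_ne_top ENNReal.ofReal_ne_top hn)).mpr h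

lemma toReal_mul_ofReal_ge {r : ℝ} (hr : 0 ≤ r) {m n : ℝ≥0∞} (hm : m ≠ ⊤) (hn : n ≠ ⊤)
    (h : ENNReal.ofReal r * n ≤ m) : r * n.toReal ≤ m.toReal := by
  have he : (ENNReal.ofReal r * n).toReal = r * n.toReal := by
    rw [ENNReal.toReal_mul, ENNReal.toReal_ofReal hr]
  rw [← he]
  exact (ENNReal.toReal_le_toReal (ENNReal.mul_ne_top ENNReal.ofReal_ne_top hn) hm).mpr h


set_option maxHeartbeats 1000000 in
/-- For each fixed `w ∈ T`, `F^T_{θ,ς²}(w) → 1` as `θ → −∞` and `F^T_{θ,ς²}(w) → 0`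
as `θ → ∞`. -/
theorem stmt_2
    (ς : ℝ) (hς : 0 < ς) (K : ℕ) (hK : 1 ≤ K) (a b : ℕ → EReal)
    (hab : ∀ i < K, a i < b i) (hba : ∀ i, i + 1 < K → b i < a (i + 1))
    (T : Set ℝ)
    (hT : T = ⋃ i ∈ Finset.range K, {x : ℝ | a i < (x : EReal) ∧ (x : EReal) < b i})
    (w : ℝ) (hw : w ∈ T) :
    Tendsto (fun θ : ℝ => truncNormalCDF ς T θ w) atBot (nhds 1) ∧
      Tendsto (fun θ : ℝ => truncNormalCDF ς T θ w) atTop (nhds 0) := by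
  set v : ℝ≥0 := Real.toNNReal (ς ^ 2) with hvdef
  have hvc : (v : ℝ) = ς ^ 2 := Real.coe_toNNReal _ (sq_nonneg ς)
  have hv : v ≠ 0 := (Real.toNNReal_pos.mpr (by positivity)).ne'
  have hv' : (0 : ℝ) < (v : ℝ) := by rw [hvc]; positivity
  -- find an interval around w inside T
  rw [hT] at hw
  simp only [mem_iUnion, Finset.mem_range, mem_setOf_eq] at hw
  obtain ⟨i, hi, haw, hwb⟩ := hw
  obtain ⟨c, hac, hcw⟩ := EReal.exists_between_coe_real haw
  obtain ⟨u, hwu, hub⟩ := EReal.exists_between_coe_real hwb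
  have hcw' : c < w := by exact_mod_cast hcw
  have hwu' : w < u := by exact_mod_cast hwu
  have hsub1 : Ioo c w ⊆ T := by
    rw [hT]; intro x hx
    simp only [mem_iUnion, Finset.mem_range, mem_setOf_eq]
    exact ⟨i, hi, hac.trans (EReal.coe_lt_coe_iff.mpr hx.1),
      (EReal.coe_lt_coe_iff.mpr hx.2).trans hwb⟩
  have hsub2 : Ioo w u ⊆ T := by
    rw [hT]; intro x hx
    simp only [mem_iUnion, Finset.mem_range, mem_setOf_eq]
    exact ⟨i, hi, hac.trans (hcw.trans (EReal.coe_lt_coe_iff.mpr hx.1)),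
      (EReal.coe_lt_coe_iff.mpr hx.2).trans hub⟩
  set c' : ℝ := (c + w) / 2 with hc'def
  set u' : ℝ := (w + u) / 2 with hu'def
  have hcc' : c < c' := by rw [hc'def]; linarith
  have hc'w : c' < w := by rw [hc'def]; linarith
  have hwu'' : w < u' := by rw [hu'def]; linarith
  have hu'u : u' < u := by rw [hu'def]; linarith
  -- positivity of denominators
  have hTpos : ∀ θ : ℝ, 0 < (gaussianReal θ v T).toReal := fun θ =>
    ENNReal.toReal_pos
      (((gauss_pos hv θ hcw').trans_le (measure_mono hsub1)).ne') (measure_ne_top _ _)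
  have hTne : ∀ θ : ℝ, (gaussianReal θ v T).toReal ≠ 0 := fun θ => (hTpos θ).ne'
  have hF : ∀ θ : ℝ, truncNormalCDF ς T θ w
      = ((gaussianReal θ v) (Iic w ∩ T)).toReal / ((gaussianReal θ v) T).toReal :=
    fun θ => rfl
  constructor
  · -- θ → -∞
    set ρ : ℝ → ℝ := fun θ =>
      ((gaussianReal θ v) (T \ Iic w)).toReal / ((gaussianReal θ v) T).toReal with hρdef
    set P1 : ℝ := ((gaussianReal 0 v) (Ioi w)).toReal with hP1
    set P2 : ℝ := ((gaussianReal 0 v) (Ioo c c')).toReal with hP2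
    have hP2pos : 0 < P2 :=
      ENNReal.toReal_pos (gauss_pos hv 0 hcc').ne' (measure_ne_top _ _)
    have hbound : ∀ θ : ℝ, θ ≤ 0 →
        ρ θ ≤ Real.exp (θ * (w - c') / (v : ℝ)) * (P1 / P2) := by
      intro θ hθ
      have h1 : ((gaussianReal θ v) (T \ Iic w)).toReal
          ≤ Real.exp (θ * w / (v:ℝ) - θ^2 / (2*(v:ℝ))) * P1 := by
        refine toReal_mul_ofReal_le (Real.exp_nonneg _) (measure_ne_top _ _)
          (le_trans (measure_mono ?_) (gauss_tilt_le hv fun x hx =>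
            mul_le_mul_of_nonpos_left hx.le hθ))
        intro x hx
        exact mem_Ioi.mpr (not_le.mp hx.2)
      have h2 : Real.exp (θ * c' / (v:ℝ) - θ^2 / (2*(v:ℝ))) * P2
          ≤ ((gaussianReal θ v) T).toReal := by
        refine toReal_mul_ofReal_ge (Real.exp_nonneg _) (measure_ne_top _ _)
          (measure_ne_top _ _)
          (le_trans (gauss_tilt_ge hv fun x hx =>
            mul_le_mul_of_nonpos_left hx.2.le hθ) (measure_mono ?_))
        exact (Ioo_subset_Ioo_right hc'w.le).trans hsub1
      have h2pos : 0 < Real.exp (θ * c' / (v:ℝ) - θ^2 / (2*(v:ℝ))) * P2 := by positivity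
      have hstep : ρ θ ≤ (Real.exp (θ * w / (v:ℝ) - θ^2 / (2*(v:ℝ))) * P1)
          / (Real.exp (θ * c' / (v:ℝ) - θ^2 / (2*(v:ℝ))) * P2) :=
        div_le_div₀ (by positivity) h1 h2pos h2
      refine hstep.trans_eq ?_
      rw [mul_div_mul_comm, ← Real.exp_sub]
      congr 2
      field_simp
      ring
    have hlim : Tendsto (fun θ : ℝ => Real.exp (θ * (w - c') / (v : ℝ)) * (P1 / P2))
        atBot (nhds 0) := by
      have hk : 0 < (w - c') / (v : ℝ) := by
        apply div_pos _ hv'; linarith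
      have : Tendsto (fun θ : ℝ => Real.exp (θ * ((w - c') / (v : ℝ)))) atBot (nhds 0) :=
        Real.tendsto_exp_atBot.comp (tendsto_id.atBot_mul_const hk)
      have := this.mul_const (P1 / P2)
      rw [zero_mul] at this
      refine this.congr fun θ => by rw [mul_div_assoc]
    have hρ0 : Tendsto ρ atBot (nhds 0) := by
      refine tendsto_of_tendsto_of_tendsto_of_le_of_le' tendsto_const_nhds hlim
        (Eventually.of_forall fun θ => div_nonneg ENNReal.toReal_nonneg
          ENNReal.toReal_nonneg) ?_
      exact (eventually_le_atBot (0:ℝ)).mono fun θ hθ => hbound θ hθ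
    have hFeq : ∀ θ : ℝ, truncNormalCDF ς T θ w = 1 - ρ θ := by
      intro θ
      have hsplit : (gaussianReal θ v) (T ∩ Iic w) + (gaussianReal θ v) (T \ Iic w)
          = (gaussianReal θ v) T := measure_inter_add_diff T measurableSet_Iic
      have hadd : ((gaussianReal θ v) (Iic w ∩ T)).toReal
          + ((gaussianReal θ v) (T \ Iic w)).toReal = ((gaussianReal θ v) T).toReal := by
        rw [inter_comm, ← ENNReal.toReal_add (measure_ne_top _ _) (measure_ne_top _ _),
          hsplit]
      rw [hF θ, hρdef]
      rw [show ((gaussianReal θ v) (Iic w ∩ T)).toReal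
          = ((gaussianReal θ v) T).toReal - ((gaussianReal θ v) (T \ Iic w)).toReal from
          by linarith]
      rw [sub_div, div_self (hTne θ)]
    have : Tendsto (fun θ : ℝ => 1 - ρ θ) atBot (nhds 1) := by
      have := (tendsto_const_nhds (x := (1:ℝ)) (f := atBot)).sub hρ0
      rwa [sub_zero] at this
    exact this.congr fun θ => (hFeq θ).symm
  · -- θ → +∞
    set Q1 : ℝ := ((gaussianReal 0 v) (Iic w)).toReal with hQ1
    set Q2 : ℝ := ((gaussianReal 0 v) (Ioo u' u)).toReal with hQ2
    have hQ2pos : 0 < Q2 :=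
      ENNReal.toReal_pos (gauss_pos hv 0 hu'u).ne' (measure_ne_top _ _)
    have hbound : ∀ θ : ℝ, 0 ≤ θ →
        truncNormalCDF ς T θ w ≤ Real.exp (θ * (w - u') / (v : ℝ)) * (Q1 / Q2) := by
      intro θ hθ
      have h1 : ((gaussianReal θ v) (Iic w ∩ T)).toReal
          ≤ Real.exp (θ * w / (v:ℝ) - θ^2 / (2*(v:ℝ))) * Q1 := by
        refine toReal_mul_ofReal_le (Real.exp_nonneg _) (measure_ne_top _ _)
          (le_trans (measure_mono inter_subset_left) (gauss_tilt_le hv fun x hx =>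
            mul_le_mul_of_nonneg_left hx hθ))
      have h2 : Real.exp (θ * u' / (v:ℝ) - θ^2 / (2*(v:ℝ))) * Q2
          ≤ ((gaussianReal θ v) T).toReal := by
        refine toReal_mul_ofReal_ge (Real.exp_nonneg _) (measure_ne_top _ _)
          (measure_ne_top _ _)
          (le_trans (gauss_tilt_ge hv fun x hx =>
            mul_le_mul_of_nonneg_left hx.1.le hθ) (measure_mono ?_))
        exact (Ioo_subset_Ioo_left hwu''.le).trans hsub2
      have h2pos : 0 < Real.exp (θ * u' / (v:ℝ) - θ^2 / (2*(v:ℝ))) * Q2 := by positivity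
      have hstep : truncNormalCDF ς T θ w
          ≤ (Real.exp (θ * w / (v:ℝ) - θ^2 / (2*(v:ℝ))) * Q1)
          / (Real.exp (θ * u' / (v:ℝ) - θ^2 / (2*(v:ℝ))) * Q2) := by
        rw [hF θ]
        exact div_le_div₀ (by positivity) h1 h2pos h2
      refine hstep.trans_eq ?_
      rw [mul_div_mul_comm, ← Real.exp_sub]
      congr 2
      field_simp
      ring
    have hlim : Tendsto (fun θ : ℝ => Real.exp (θ * (w - u') / (v : ℝ)) * (Q1 / Q2))
        atTop (nhds 0) := by
      have hk : (w - u') / (v : ℝ) < 0 := by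
        apply div_neg_of_neg_of_pos _ hv'; linarith
      have : Tendsto (fun θ : ℝ => Real.exp (θ * ((w - u') / (v : ℝ)))) atTop (nhds 0) :=
        Real.tendsto_exp_atBot.comp (tendsto_id.atTop_mul_const_of_neg hk)
      have := this.mul_const (Q1 / Q2)
      rw [zero_mul] at this
      refine this.congr fun θ => by rw [mul_div_assoc]
    refine tendsto_of_tendsto_of_tendsto_of_le_of_le' tendsto_const_nhds hlim
      (Eventually.of_forall fun θ => by
        rw [hF θ]; exact div_nonneg ENNReal.toReal_nonneg ENNReal.toReal_nonneg) ?_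
    exact (eventually_ge_atTop (0:ℝ)).mono fun θ hθ => hbound θ hθ
end

section
/- For every w ∈ T and every γ ∈ (0,1), there exists a unique θ ∈ ℝ such that F^T_{θ,ς²}(w) = γ; this unique solution is denoted Q_γ(w). -/
open Filter MeasureTheory ProbabilityTheory Set Topology
open scoped ENNReal NNReal

namespace TruncAux

/-- Unnormalized Gaussian kernel. -/
noncomputable def E (ς θ x : ℝ) : ℝ := Real.exp (-(x - θ)^2 / (2 * ς^2))

lemma E_pos (ς θ x : ℝ) : 0 < E ς θ x := Real.exp_pos _

lemma continuous_E_x (ς θ : ℝ) : Continuous (fun x => E ς θ x) := by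
  unfold E; fun_prop

lemma continuous_E_theta (ς x : ℝ) : Continuous (fun θ => E ς θ x) := by
  unfold E; fun_prop

lemma integrable_E {ς : ℝ} (hς : 0 < ς) (θ : ℝ) : Integrable (fun x => E ς θ x) := by
  have hb : (0:ℝ) < (2*ς^2)⁻¹ := by positivity
  have h := (integrable_exp_neg_mul_sq hb).comp_sub_right θ
  refine h.congr (Filter.Eventually.of_forall fun x => ?_)
  show _ = _
  unfold E
  rw [Real.exp_eq_exp]
  ring

lemma E_setIntegral_pos {ς : ℝ} (hς : 0 < ς) (θ : ℝ) {S : Set ℝ} {c d : ℝ}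
    (hcd : c < d) (hsub : Ioo c d ⊆ S) : 0 < ∫ x in S, E ς θ x := by
  rw [setIntegral_pos_iff_support_of_nonneg_ae
    (ae_of_all _ fun x => (E_pos ς θ x).le) ((integrable_E hς θ).integrableOn)]
  refine lt_of_lt_of_le ?_
    (measure_mono (fun x hx => ⟨Function.mem_support.mpr (E_pos ς θ x).ne', hsub hx⟩))
  rw [Real.volume_Ioo]
  exact ENNReal.ofReal_pos.2 (by linarith)

lemma continuous_setIntegral_E {ς : ℝ} (hς : 0 < ς) (S : Set ℝ) :
    Continuous (fun θ => ∫ x in S, E ς θ x) := by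
  rw [continuous_iff_continuousAt]
  intro θ0
  refine continuousAt_of_dominated
    (bound := fun x => Real.exp (1/ς^2) * Real.exp (-(x-θ0)^2/(4*ς^2)))
    (Filter.Eventually.of_forall fun θ => ((continuous_E_x ς θ).aestronglyMeasurable).restrict)
    ?_ ?_ (ae_of_all _ fun x => (continuous_E_theta ς x).continuousAt)
  · filter_upwards [Metric.closedBall_mem_nhds θ0 one_pos] with θ hθ
    refine ae_of_all _ fun x => ?_
    have hd : |θ - θ0| ≤ 1 := by rw [Metric.mem_closedBall, Real.dist_eq] at hθ; exact hθ
    have hd2 : (θ - θ0)^2 ≤ 1 := by nlinarith [abs_nonneg (θ - θ0), sq_abs (θ - θ0)]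
    rw [Real.norm_eq_abs, abs_of_pos (E_pos ς θ x)]
    unfold E
    rw [← Real.exp_add, Real.exp_le_exp]
    have P : -(x-θ)^2 ≤ 2 - (x-θ0)^2/2 := by nlinarith [sq_nonneg (x - θ0 - 2*(θ-θ0))]
    have h2 : (0:ℝ) < 2*ς^2 := by positivity
    calc -(x-θ)^2/(2*ς^2) ≤ (2 - (x-θ0)^2/2)/(2*ς^2) := by gcongr
      _ = 1/ς^2 + -(x-θ0)^2/(4*ς^2) := by field_simp; ring
  · have hb : (0:ℝ) < (4*ς^2)⁻¹ := by positivity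
    have h := ((integrable_exp_neg_mul_sq hb).comp_sub_right θ0).const_mul (Real.exp (1/ς^2))
    refine (h.congr (Filter.Eventually.of_forall fun x => ?_)).restrict
    show _ = _
    dsimp only
    rw [← Real.exp_add, ← Real.exp_add, Real.exp_eq_exp]
    ring

lemma cross {ς : ℝ} (hς : 0 < ς) {T : Set ℝ} (hTm : MeasurableSet T) {w ε : ℝ}
    (hε : 0 < ε) (hsub : Ioo (w-ε) (w+ε) ⊆ T) {θ₁ θ₂ : ℝ} (hθ : θ₁ < θ₂) :
    (∫ x in T ∩ Iic w, E ς θ₂ x) * (∫ x in T ∩ Ioi w, E ς θ₁ x) <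
      (∫ x in T ∩ Iic w, E ς θ₁ x) * (∫ x in T ∩ Ioi w, E ς θ₂ x) := by
  set S1 := T ∩ Iic w with hS1
  set S2 := T ∩ Ioi w with hS2
  have h2 : (0:ℝ) < 2*ς^2 := by positivity
  have hpt : ∀ x y : ℝ, x ≤ w → w < y → E ς θ₂ x * E ς θ₁ y < E ς θ₁ x * E ς θ₂ y := by
    intro x y hx hy
    unfold E
    rw [← Real.exp_add, ← Real.exp_add, Real.exp_lt_exp, ← add_div, ← add_div,
      div_lt_div_iff₀ h2 h2]
    nlinarith [mul_pos (mul_pos h2 (sub_pos.2 hθ)) (sub_pos.2 (lt_of_le_of_lt hx hy))]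
  have hint : ∀ θ θ' : ℝ,
      IntegrableOn (fun z : ℝ × ℝ => E ς θ z.1 * E ς θ' z.2) (S1 ×ˢ S2)
        (volume.prod volume) := by
    intro θ θ'
    rw [IntegrableOn, ← Measure.prod_restrict]
    exact ((integrable_E hς θ).restrict).mul_prod ((integrable_E hς θ').restrict)
  have key : 0 < ∫ z in S1 ×ˢ S2,
      (E ς θ₁ z.1 * E ς θ₂ z.2 - E ς θ₂ z.1 * E ς θ₁ z.2) ∂(volume.prod volume) := by
    have hmemle : ∀ z : ℝ × ℝ, z ∈ S1 ×ˢ S2 →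
        0 ≤ E ς θ₁ z.1 * E ς θ₂ z.2 - E ς θ₂ z.1 * E ς θ₁ z.2 := fun z hz =>
      sub_nonneg.2 (hpt z.1 z.2 hz.1.2 hz.2.2).le
    have hSm : MeasurableSet (S1 ×ˢ S2) :=
      (hTm.inter measurableSet_Iic).prod (hTm.inter measurableSet_Ioi)
    rw [setIntegral_pos_iff_support_of_nonneg_ae (ae_restrict_of_forall_mem hSm hmemle)
      ((hint θ₁ θ₂).sub (hint θ₂ θ₁))]
    refine lt_of_lt_of_le
      (show (0:ℝ≥0∞) < (volume.prod volume) (Ioo (w-ε) w ×ˢ Ioo w (w+ε)) from ?_)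
      (measure_mono ?_)
    · rw [Measure.prod_prod, Real.volume_Ioo, Real.volume_Ioo]
      have h1 : (0:ℝ≥0∞) < ENNReal.ofReal (w - (w-ε)) := ENNReal.ofReal_pos.2 (by linarith)
      have h2' : (0:ℝ≥0∞) < ENNReal.ofReal (w+ε - w) := ENNReal.ofReal_pos.2 (by linarith)
      exact ENNReal.mul_pos h1.ne' h2'.ne'
    · intro z hz
      have hz1 : z.1 ∈ Ioo (w-ε) w := hz.1
      have hz2 : z.2 ∈ Ioo w (w+ε) := hz.2
      have hz1T : z.1 ∈ S1 := ⟨hsub ⟨hz1.1, by linarith [hz1.2]⟩, le_of_lt hz1.2⟩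
      have hz2T : z.2 ∈ S2 := ⟨hsub ⟨by linarith [hz2.1], hz2.2⟩, hz2.1⟩
      exact ⟨Function.mem_support.mpr
        (sub_pos.2 (hpt z.1 z.2 hz1T.2 hz2T.2)).ne', hz1T, hz2T⟩
  have e1 : ∫ z in S1 ×ˢ S2, E ς θ₁ z.1 * E ς θ₂ z.2 ∂(volume.prod volume)
      = (∫ x in S1, E ς θ₁ x) * (∫ y in S2, E ς θ₂ y) := setIntegral_prod_mul _ _ _ _
  have e2 : ∫ z in S1 ×ˢ S2, E ς θ₂ z.1 * E ς θ₁ z.2 ∂(volume.prod volume)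
      = (∫ x in S1, E ς θ₂ x) * (∫ y in S2, E ς θ₁ y) := setIntegral_prod_mul _ _ _ _
  rw [integral_sub (hint θ₁ θ₂) (hint θ₂ θ₁), e1, e2] at key
  linarith

lemma tendsto_J_atBot {ς : ℝ} (hς : 0 < ς) (w : ℝ) :
    Tendsto (fun θ => ∫ x in Ioi w, Real.exp ((w-x)*(w+x-2*θ)/(2*ς^2))) atBot (𝓝 0) := by
  have hb : (0:ℝ) < (2*ς^2)⁻¹ := by positivity
  have hbound : Integrable (fun x => Real.exp (-(x-w)^2/(2*ς^2))) := by
    have h := (integrable_exp_neg_mul_sq hb).comp_sub_right w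
    refine h.congr (Filter.Eventually.of_forall fun x => ?_)
    show _ = _
    rw [Real.exp_eq_exp]
    ring
  have key := tendsto_integral_filter_of_dominated_convergence
    (μ := volume.restrict (Ioi w)) (l := atBot)
    (F := fun (θ : ℝ) (x : ℝ) => Real.exp ((w-x)*(w+x-2*θ)/(2*ς^2)))
    (f := fun _ => (0:ℝ))
    (fun x => Real.exp (-(x-w)^2/(2*ς^2)))
    (Filter.Eventually.of_forall fun θ =>
      (((Real.continuous_exp.comp (by fun_prop)).aestronglyMeasurable).restrict))
    ?_ hbound.restrict ?_
  · simpa using key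
  · filter_upwards [eventually_le_atBot w] with θ hθ
    refine ae_restrict_of_forall_mem measurableSet_Ioi fun x hx => ?_
    have hx' : w < x := hx
    rw [Real.norm_eq_abs, Real.abs_exp, Real.exp_le_exp]
    gcongr
    nlinarith [mul_nonneg (by linarith : (0:ℝ) ≤ x - w) (by linarith : (0:ℝ) ≤ w - θ)]
  · refine ae_restrict_of_forall_mem measurableSet_Ioi fun x hx => ?_
    have hx' : w < x := hx
    have hlin : Tendsto (fun θ : ℝ => (w-x)*(w+x-2*θ)/(2*ς^2)) atBot atBot := by
      have heq : (fun θ : ℝ => (w-x)*(w+x-2*θ)/(2*ς^2))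
          = fun θ : ℝ => ((x-w)/ς^2)*θ + (w-x)*(w+x)/(2*ς^2) := by
        funext θ; field_simp; ring
      rw [heq]
      exact tendsto_atBot_add_const_right _ _
        (Tendsto.const_mul_atBot (div_pos (by linarith) (by positivity)) tendsto_id)
    exact Real.tendsto_exp_atBot.comp hlin

lemma tendsto_J_atTop {ς : ℝ} (hς : 0 < ς) (w : ℝ) :
    Tendsto (fun θ => ∫ x in Iio w, Real.exp ((w-x)*(w+x-2*θ)/(2*ς^2))) atTop (𝓝 0) := by
  have hb : (0:ℝ) < (2*ς^2)⁻¹ := by positivity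
  have hbound : Integrable (fun x => Real.exp (-(x-w)^2/(2*ς^2))) := by
    have h := (integrable_exp_neg_mul_sq hb).comp_sub_right w
    refine h.congr (Filter.Eventually.of_forall fun x => ?_)
    show _ = _
    rw [Real.exp_eq_exp]
    ring
  have key := tendsto_integral_filter_of_dominated_convergence
    (μ := volume.restrict (Iio w)) (l := atTop)
    (F := fun (θ : ℝ) (x : ℝ) => Real.exp ((w-x)*(w+x-2*θ)/(2*ς^2)))
    (f := fun _ => (0:ℝ))
    (fun x => Real.exp (-(x-w)^2/(2*ς^2)))
    (Filter.Eventually.of_forall fun θ =>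
      (((Real.continuous_exp.comp (by fun_prop)).aestronglyMeasurable).restrict))
    ?_ hbound.restrict ?_
  · simpa using key
  · filter_upwards [eventually_ge_atTop w] with θ hθ
    refine ae_restrict_of_forall_mem measurableSet_Iio fun x hx => ?_
    have hx' : x < w := hx
    rw [Real.norm_eq_abs, Real.abs_exp, Real.exp_le_exp]
    gcongr
    nlinarith [mul_nonneg (by linarith : (0:ℝ) ≤ w - x) (by linarith : (0:ℝ) ≤ 2*θ - 2*w)]
  · refine ae_restrict_of_forall_mem measurableSet_Iio fun x hx => ?_
    have hx' : x < w := hx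
    have hlin : Tendsto (fun θ : ℝ => (w-x)*(w+x-2*θ)/(2*ς^2)) atTop atBot := by
      have heq : (fun θ : ℝ => (w-x)*(w+x-2*θ)/(2*ς^2))
          = fun θ : ℝ => ((x-w)/ς^2)*θ + (w-x)*(w+x)/(2*ς^2) := by
        funext θ; field_simp; ring
      rw [heq]
      refine tendsto_atBot_add_const_right _ _ ?_
      exact Tendsto.const_mul_atTop_of_neg
        (div_neg_of_neg_of_pos (by linarith) (by positivity)) tendsto_id
    exact Real.tendsto_exp_atBot.comp hlin

lemma tendsto_ratio_atBot {ς : ℝ} (hς : 0 < ς) {T : Set ℝ} {w ε : ℝ}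
    (hε : 0 < ε) (hsub : Ioo (w-ε) (w+ε) ⊆ T) :
    Tendsto (fun θ => (∫ x in T ∩ Ioi w, E ς θ x) / (∫ x in T ∩ Iic w, E ς θ x))
      atBot (𝓝 0) := by
  set J : ℝ → ℝ := fun θ => ∫ x in Ioi w, Real.exp ((w-x)*(w+x-2*θ)/(2*ς^2)) with hJdef
  have hJ0 : Tendsto J atBot (𝓝 0) := tendsto_J_atBot hς w
  have hApos : ∀ θ, 0 < ∫ x in T ∩ Iic w, E ς θ x := fun θ =>
    E_setIntegral_pos hς θ (show w-ε < w by linarith)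
      (fun x hx => ⟨hsub ⟨hx.1, by linarith [hx.2]⟩, hx.2.le⟩)
  have hBpos : ∀ θ, 0 < ∫ x in T ∩ Ioi w, E ς θ x := fun θ =>
    E_setIntegral_pos hς θ (show w < w+ε by linarith)
      (fun x hx => ⟨hsub ⟨by linarith [hx.1], hx.2⟩, hx.1⟩)
  refine squeeze_zero'
    (Filter.Eventually.of_forall fun θ => div_nonneg (hBpos θ).le (hApos θ).le)
    ?_ (by simpa using hJ0.div_const ε)
  filter_upwards [eventually_le_atBot (w-ε)] with θ hθ
  have hJnonneg : 0 ≤ J θ := integral_nonneg fun x => (Real.exp_pos _).le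
  have hup : (∫ x in T ∩ Ioi w, E ς θ x) ≤ E ς θ w * J θ := by
    have h1 : (∫ x in T ∩ Ioi w, E ς θ x) ≤ ∫ x in Ioi w, E ς θ x :=
      setIntegral_mono_set ((integrable_E hς θ).integrableOn)
        (ae_of_all _ fun x => (E_pos ς θ x).le)
        (HasSubset.Subset.eventuallyLE inter_subset_right)
    have h2 : (∫ x in Ioi w, E ς θ x) = E ς θ w * J θ := by
      rw [hJdef, ← integral_const_mul]
      refine setIntegral_congr_fun measurableSet_Ioi fun x _ => ?_
      unfold E
      rw [← Real.exp_add, Real.exp_eq_exp]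
      field_simp
      ring
    linarith
  have hlow : ε * E ς θ w ≤ ∫ x in T ∩ Iic w, E ς θ x := by
    have h1 : (∫ x in Ioo (w-ε) w, E ς θ x) ≤ ∫ x in T ∩ Iic w, E ς θ x :=
      setIntegral_mono_set ((integrable_E hς θ).integrableOn)
        (ae_of_all _ fun x => (E_pos ς θ x).le)
        (HasSubset.Subset.eventuallyLE
          (fun x hx => ⟨hsub ⟨hx.1, by linarith [hx.2]⟩, hx.2.le⟩))
    have h3 : (∫ _x in Ioo (w-ε) w, E ς θ w) = ε * E ς θ w := by
      rw [setIntegral_const, measureReal_def, Real.volume_Ioo, ENNReal.toReal_ofReal (by linarith), smul_eq_mul]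
      ring_nf
    have h2 : ε * E ς θ w ≤ ∫ x in Ioo (w-ε) w, E ς θ x := by
      rw [← h3]
      refine setIntegral_mono_on
        (integrableOn_const (by rw [Real.volume_Ioo]; exact ENNReal.ofReal_ne_top))
        ((integrable_E hς θ).integrableOn) measurableSet_Ioo fun x hx => ?_
      unfold E
      rw [Real.exp_le_exp]
      have h2' : (0:ℝ) < 2*ς^2 := by positivity
      rw [div_le_div_iff₀ h2' h2']
      nlinarith [mul_nonneg (mul_nonneg (le_of_lt h2') (by linarith [hx.2] : (0:ℝ) ≤ w - x))
        (by linarith [hx.1] : (0:ℝ) ≤ w + x - 2*θ)]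
    linarith
  calc (∫ x in T ∩ Ioi w, E ς θ x) / (∫ x in T ∩ Iic w, E ς θ x)
      ≤ (E ς θ w * J θ) / (ε * E ς θ w) := by
        refine div_le_div₀ (mul_nonneg (E_pos ς θ w).le hJnonneg) hup
          (mul_pos hε (E_pos ς θ w)) hlow
    _ = J θ / ε := by
        rw [mul_comm ε]
        exact mul_div_mul_left _ _ (E_pos ς θ w).ne'

lemma tendsto_ratio_atTop {ς : ℝ} (hς : 0 < ς) {T : Set ℝ} {w ε : ℝ}
    (hε : 0 < ε) (hsub : Ioo (w-ε) (w+ε) ⊆ T) :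
    Tendsto (fun θ => (∫ x in T ∩ Iic w, E ς θ x) / (∫ x in T ∩ Ioi w, E ς θ x))
      atTop (𝓝 0) := by
  set J : ℝ → ℝ := fun θ => ∫ x in Iio w, Real.exp ((w-x)*(w+x-2*θ)/(2*ς^2)) with hJdef
  have hJ0 : Tendsto J atTop (𝓝 0) := tendsto_J_atTop hς w
  have hApos : ∀ θ, 0 < ∫ x in T ∩ Iic w, E ς θ x := fun θ =>
    E_setIntegral_pos hς θ (show w-ε < w by linarith)
      (fun x hx => ⟨hsub ⟨hx.1, by linarith [hx.2]⟩, hx.2.le⟩)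
  have hBpos : ∀ θ, 0 < ∫ x in T ∩ Ioi w, E ς θ x := fun θ =>
    E_setIntegral_pos hς θ (show w < w+ε by linarith)
      (fun x hx => ⟨hsub ⟨by linarith [hx.1], hx.2⟩, hx.1⟩)
  refine squeeze_zero'
    (Filter.Eventually.of_forall fun θ => div_nonneg (hApos θ).le (hBpos θ).le)
    ?_ (by simpa using hJ0.div_const ε)
  filter_upwards [eventually_ge_atTop (w+ε)] with θ hθ
  have hJnonneg : 0 ≤ J θ := integral_nonneg fun x => (Real.exp_pos _).le
  have hup : (∫ x in T ∩ Iic w, E ς θ x) ≤ E ς θ w * J θ := by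
    have h1 : (∫ x in T ∩ Iic w, E ς θ x) ≤ ∫ x in Iic w, E ς θ x :=
      setIntegral_mono_set ((integrable_E hς θ).integrableOn)
        (ae_of_all _ fun x => (E_pos ς θ x).le)
        (HasSubset.Subset.eventuallyLE inter_subset_right)
    have h1' : (∫ x in Iic w, E ς θ x) = ∫ x in Iio w, E ς θ x :=
      (setIntegral_congr_set Iio_ae_eq_Iic).symm
    have h2 : (∫ x in Iio w, E ς θ x) = E ς θ w * J θ := by
      rw [hJdef, ← integral_const_mul]
      refine setIntegral_congr_fun measurableSet_Iio fun x _ => ?_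
      unfold E
      rw [← Real.exp_add, Real.exp_eq_exp]
      field_simp
      ring
    linarith
  have hlow : ε * E ς θ w ≤ ∫ x in T ∩ Ioi w, E ς θ x := by
    have h1 : (∫ x in Ioo w (w+ε), E ς θ x) ≤ ∫ x in T ∩ Ioi w, E ς θ x :=
      setIntegral_mono_set ((integrable_E hς θ).integrableOn)
        (ae_of_all _ fun x => (E_pos ς θ x).le)
        (HasSubset.Subset.eventuallyLE
          (fun x hx => ⟨hsub ⟨by linarith [hx.1], hx.2⟩, hx.1⟩))
    have h3 : (∫ _x in Ioo w (w+ε), E ς θ w) = ε * E ς θ w := by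
      rw [setIntegral_const, measureReal_def, Real.volume_Ioo, ENNReal.toReal_ofReal (by linarith), smul_eq_mul]
      ring_nf
    have h2 : ε * E ς θ w ≤ ∫ x in Ioo w (w+ε), E ς θ x := by
      rw [← h3]
      refine setIntegral_mono_on
        (integrableOn_const (by rw [Real.volume_Ioo]; exact ENNReal.ofReal_ne_top))
        ((integrable_E hς θ).integrableOn) measurableSet_Ioo fun x hx => ?_
      unfold E
      rw [Real.exp_le_exp]
      have h2' : (0:ℝ) < 2*ς^2 := by positivity
      rw [div_le_div_iff₀ h2' h2']
      nlinarith [mul_nonneg (mul_nonneg (le_of_lt h2') (by linarith [hx.1] : (0:ℝ) ≤ x - w))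
        (by linarith [hx.2] : (0:ℝ) ≤ 2*θ - w - x)]
    linarith
  calc (∫ x in T ∩ Iic w, E ς θ x) / (∫ x in T ∩ Ioi w, E ς θ x)
      ≤ (E ς θ w * J θ) / (ε * E ς θ w) := by
        refine div_le_div₀ (mul_nonneg (E_pos ς θ w).le hJnonneg) hup
          (mul_pos hε (E_pos ς θ w)) hlow
    _ = J θ / ε := by
        rw [mul_comm ε]
        exact mul_div_mul_left _ _ (E_pos ς θ w).ne'

lemma cdf_eq {ς : ℝ} (hς : 0 < ς) {T : Set ℝ} (hTm : MeasurableSet T) (w θ : ℝ) :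
    truncNormalCDF ς T θ w = (∫ x in T ∩ Iic w, E ς θ x) /
      ((∫ x in T ∩ Iic w, E ς θ x) + (∫ x in T ∩ Ioi w, E ς θ x)) := by
  have hv : Real.toNNReal (ς^2) ≠ 0 := by
    rw [ne_eq, Real.toNNReal_eq_zero, not_le]
    positivity
  have hcoe : ((Real.toNNReal (ς^2)) : ℝ) = ς^2 := Real.coe_toNNReal _ (by positivity)
  set c : ℝ := (Real.sqrt (2*Real.pi*ς^2))⁻¹ with hc
  have hcpos : 0 < c := by
    rw [hc]
    have : (0:ℝ) < 2*Real.pi*ς^2 := by positivity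
    positivity
  have hpdf : ∀ x : ℝ, gaussianPDFReal θ (Real.toNNReal (ς^2)) x = c * E ς θ x := by
    intro x
    rw [gaussianPDFReal, hcoe, hc]
    unfold E
    ring_nf
  have hint1 : ∀ S : Set ℝ,
      (∫ x in S, gaussianPDFReal θ (Real.toNNReal (ς^2)) x) = c * ∫ x in S, E ς θ x := by
    intro S
    simp_rw [hpdf]
    exact integral_const_mul c _
  have hsplit : (∫ x in T, E ς θ x)
      = (∫ x in T ∩ Iic w, E ς θ x) + (∫ x in T ∩ Ioi w, E ς θ x) := by
    rw [← setIntegral_union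
      ((Set.Iic_disjoint_Ioi le_rfl).mono inter_subset_right inter_subset_right)
      (hTm.inter measurableSet_Ioi)
      ((integrable_E hς θ).integrableOn) ((integrable_E hς θ).integrableOn)]
    rw [← Set.inter_union_distrib_left, Set.Iic_union_Ioi, Set.inter_univ]
  unfold truncNormalCDF
  rw [gaussianReal_apply_eq_integral _ hv, gaussianReal_apply_eq_integral _ hv,
    ENNReal.toReal_ofReal (integral_nonneg fun x => gaussianPDFReal_nonneg _ _ x),
    ENNReal.toReal_ofReal (integral_nonneg fun x => gaussianPDFReal_nonneg _ _ x),
    show Set.Iic w ∩ T = T ∩ Set.Iic w from Set.inter_comm _ _,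
    hint1, hint1, hsplit, mul_div_mul_left _ _ (ne_of_gt hcpos)]

theorem main {ς : ℝ} (hς : 0 < ς) {T : Set ℝ} (hTo : IsOpen T) {w : ℝ} (hw : w ∈ T)
    {γ : ℝ} (hγ : γ ∈ Set.Ioo (0:ℝ) 1) : ∃! θ : ℝ, truncNormalCDF ς T θ w = γ := by
  obtain ⟨ε, hε0, hεsub⟩ := Metric.isOpen_iff.1 hTo w hw
  rw [Real.ball_eq_Ioo] at hεsub
  have hTm := hTo.measurableSet
  set A : ℝ → ℝ := fun θ => ∫ x in T ∩ Iic w, E ς θ x with hA_def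
  set B : ℝ → ℝ := fun θ => ∫ x in T ∩ Ioi w, E ς θ x with hB_def
  have hApos : ∀ θ, 0 < A θ := fun θ =>
    E_setIntegral_pos hς θ (show w-ε < w by linarith)
      (fun x hx => ⟨hεsub ⟨hx.1, by linarith [hx.2]⟩, hx.2.le⟩)
  have hBpos : ∀ θ, 0 < B θ := fun θ =>
    E_setIntegral_pos hς θ (show w < w+ε by linarith)
      (fun x hx => ⟨hεsub ⟨by linarith [hx.1], hx.2⟩, hx.1⟩)
  set f : ℝ → ℝ := fun θ => A θ / (A θ + B θ) with hf_def
  have hcdf : ∀ θ, truncNormalCDF ς T θ w = f θ := fun θ => cdf_eq hς hTm w θ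
  have hanti : StrictAnti f := by
    intro θ₁ θ₂ hθ
    have hc := cross hς hTm hε0 hεsub hθ
    rw [hf_def]
    simp only
    rw [div_lt_div_iff₀ (add_pos (hApos θ₂) (hBpos θ₂)) (add_pos (hApos θ₁) (hBpos θ₁))]
    nlinarith [hc]
  have hcont : Continuous f := by
    refine Continuous.div (continuous_setIntegral_E hς _)
      ((continuous_setIntegral_E hς _).add (continuous_setIntegral_E hς _))
      (fun θ => (add_pos (hApos θ) (hBpos θ)).ne')
  have hbot : Tendsto f atBot (𝓝 1) := by
    have hr := tendsto_ratio_atBot hς hε0 hεsub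
    have heq : f = fun θ => (1 + B θ / A θ)⁻¹ := by
      funext θ
      have h1 := (hApos θ).ne'
      have h2 := (add_pos (hApos θ) (hBpos θ)).ne'
      rw [hf_def]
      field_simp
    rw [heq]
    have h := (tendsto_const_nhds.add hr).inv₀ (by norm_num : (1:ℝ) + 0 ≠ 0)
    simpa using h
  have htop : Tendsto f atTop (𝓝 0) := by
    have hr := tendsto_ratio_atTop hς hε0 hεsub
    have heq : f = fun θ => (A θ / B θ) / (A θ / B θ + 1) := by
      funext θ
      have h1 := (hApos θ).ne'
      have h2 := (hBpos θ).ne'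
      have h3 := (add_pos (hApos θ) (hBpos θ)).ne'
      rw [hf_def]
      field_simp
    rw [heq]
    have h := hr.div (hr.add tendsto_const_nhds) (by norm_num : (0:ℝ) + 1 ≠ 0)
    rw [zero_div] at h
    exact h
  obtain ⟨θ₁, hθ₁⟩ := (hbot.eventually (eventually_gt_nhds hγ.2)).exists
  obtain ⟨θ₂, hθ₂⟩ := (htop.eventually (eventually_lt_nhds hγ.1)).exists
  have hmem : γ ∈ uIcc (f θ₁) (f θ₂) := by
    rw [Set.mem_uIcc]
    exact Or.inr ⟨hθ₂.le, hθ₁.le⟩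
  obtain ⟨θ0, _, hθ0⟩ := intermediate_value_uIcc (hcont.continuousOn) hmem
  refine ⟨θ0, ?_, fun y hy => ?_⟩
  · show truncNormalCDF ς T θ0 w = γ
    rw [hcdf θ0]; exact hθ0
  have hfy : f y = f θ0 := by
    rw [hθ0, ← hcdf y]
    exact hy
  exact hanti.injective hfy

end TruncAux

/-- For every `w ∈ T` and every `γ ∈ (0,1)`, there exists a unique `θ ∈ ℝ` with
`F^T_{θ,ς²}(w) = γ` (this unique solution is denoted `Q_γ(w)`). -/
theorem stmt_3
    (ς : ℝ) (hς : 0 < ς) (K : ℕ) (hK : 1 ≤ K) (a b : ℕ → EReal)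
    (hab : ∀ i < K, a i < b i) (hba : ∀ i, i + 1 < K → b i < a (i + 1))
    (T : Set ℝ)
    (hT : T = ⋃ i ∈ Finset.range K, {x : ℝ | a i < (x : EReal) ∧ (x : EReal) < b i})
    (w : ℝ) (hw : w ∈ T) (γ : ℝ) (hγ : γ ∈ Set.Ioo (0 : ℝ) 1) :
    ∃! θ : ℝ, truncNormalCDF ς T θ w = γ := by
  have hTo : IsOpen T := by
    rw [hT]
    refine isOpen_biUnion fun i _ => ?_
    have heq : {x : ℝ | a i < (x : EReal) ∧ (x : EReal) < b i}
        = (fun x : ℝ => (x : EReal)) ⁻¹' (Set.Ioo (a i) (b i)) := rfl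
    rw [heq]
    exact isOpen_Ioo.preimage continuous_coe_real_ereal
  exact TruncAux.main hς hTo hw hγ
end

section
/- For each fixed w ∈ T, the map γ ↦ Q_γ(w) is strictly decreasing on (0,1). -/
open Filter MeasureTheory ProbabilityTheory Set
open scoped NNReal ENNReal

open Real in
lemma pdf_cross (v : ℝ≥0) (hv : 0 < (v : ℝ)) {θ1 θ2 x y : ℝ} (hθ : θ1 ≤ θ2) (hxy : x ≤ y) :
    gaussianPDFReal θ2 v x * gaussianPDFReal θ1 v y
      ≤ gaussianPDFReal θ1 v x * gaussianPDFReal θ2 v y := by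
  simp only [gaussianPDFReal]
  have h2v : (0 : ℝ) < 2 * v := by linarith
  have hc : (0 : ℝ) ≤ (√(2 * π * (v : ℝ)))⁻¹ := by positivity
  have key : rexp (-(x - θ2) ^ 2 / (2 * v)) * rexp (-(y - θ1) ^ 2 / (2 * v))
      ≤ rexp (-(x - θ1) ^ 2 / (2 * v)) * rexp (-(y - θ2) ^ 2 / (2 * v)) := by
    rw [← Real.exp_add, ← Real.exp_add]
    apply Real.exp_le_exp.mpr
    rw [← add_div, ← add_div, div_le_div_iff₀ h2v h2v]
    nlinarith [mul_nonneg (sub_nonneg.mpr hxy) (sub_nonneg.mpr hθ), h2v]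
  nlinarith [mul_le_mul_of_nonneg_left key (mul_nonneg hc hc)]

lemma cross_integral (v : ℝ≥0) (hv : 0 < (v : ℝ)) {θ1 θ2 w : ℝ} (hθ : θ1 ≤ θ2)
    {A C : Set ℝ} (hA : MeasurableSet A) (hC : MeasurableSet C)
    (hAw : A ⊆ Set.Iic w) (hCw : C ⊆ Set.Ioi w) :
    (∫ x in A, gaussianPDFReal θ2 v x) * (∫ y in C, gaussianPDFReal θ1 v y)
      ≤ (∫ x in A, gaussianPDFReal θ1 v x) * (∫ y in C, gaussianPDFReal θ2 v y) := by
  set f1 := gaussianPDFReal θ1 v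
  set f2 := gaussianPDFReal θ2 v
  have hint1 : IntegrableOn f1 C := (integrable_gaussianPDFReal θ1 v).integrableOn
  have hint2 : IntegrableOn f2 C := (integrable_gaussianPDFReal θ2 v).integrableOn
  have hint1A : IntegrableOn f1 A := (integrable_gaussianPDFReal θ1 v).integrableOn
  have hint2A : IntegrableOn f2 A := (integrable_gaussianPDFReal θ2 v).integrableOn
  set I1 := ∫ y in C, f1 y
  set I2 := ∫ y in C, f2 y
  have step : ∀ x ∈ A, f2 x * I1 ≤ f1 x * I2 := by
    intro x hx
    have hxw : x ≤ w := hAw hx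
    calc f2 x * I1 = ∫ y in C, f2 x * f1 y := (integral_const_mul _ _).symm
      _ ≤ ∫ y in C, f1 x * f2 y := by
          refine setIntegral_mono_on (hint1.const_mul _) (hint2.const_mul _) hC ?_
          intro y hy
          exact pdf_cross v hv hθ (hxw.trans (hCw hy).le)
      _ = f1 x * I2 := integral_const_mul _ _
  calc (∫ x in A, f2 x) * I1 = ∫ x in A, f2 x * I1 := (integral_mul_const _ _).symm
    _ ≤ ∫ x in A, f1 x * I2 :=
        setIntegral_mono_on (hint2A.mul_const _) (hint1A.mul_const _) hA step
    _ = (∫ x in A, f1 x) * I2 := integral_mul_const _ _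

/-- For each fixed `w ∈ T`, the map `γ ↦ Q_γ(w)` is strictly decreasing on `(0,1)`.
Here `Q : ℝ → ℝ` is any function such that `Q γ` is the (unique) solution `θ` of
`F^T_{θ,ς²}(w) = γ` for every `γ ∈ (0,1)`. -/
theorem stmt_4
    (ς : ℝ) (hς : 0 < ς) (K : ℕ) (hK : 1 ≤ K) (a b : ℕ → EReal)
    (hab : ∀ i < K, a i < b i) (hba : ∀ i, i + 1 < K → b i < a (i + 1))
    (T : Set ℝ)
    (hT : T = ⋃ i ∈ Finset.range K, {x : ℝ | a i < (x : EReal) ∧ (x : EReal) < b i})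
    (w : ℝ) (hw : w ∈ T) (Q : ℝ → ℝ)
    (hQ : ∀ γ ∈ Set.Ioo (0 : ℝ) 1, truncNormalCDF ς T (Q γ) w = γ) :
    StrictAntiOn Q (Set.Ioo (0 : ℝ) 1) := by
  set v : ℝ≥0 := Real.toNNReal (ς ^ 2) with hv_def
  have hv : (0 : ℝ) < v := by
    simp only [hv_def, Real.coe_toNNReal _ (sq_nonneg ς)]
    positivity
  have hv0 : v ≠ 0 := by
    intro h; rw [h] at hv; simp at hv
  -- T is open
  have hTopen : IsOpen T := by
    rw [hT]
    refine isOpen_biUnion fun i _ => ?_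
    have : {x : ℝ | a i < (x : EReal) ∧ (x : EReal) < b i}
        = (fun x : ℝ => (x : EReal)) ⁻¹' Set.Ioo (a i) (b i) := rfl
    rw [this]
    exact (isOpen_Ioo).preimage continuous_coe_real_ereal
  have hTmeas : MeasurableSet T := hTopen.measurableSet
  set A : Set ℝ := Set.Iic w ∩ T with hA_def
  set C : Set ℝ := Set.Ioi w ∩ T with hC_def
  have hAmeas : MeasurableSet A := measurableSet_Iic.inter hTmeas
  have hCmeas : MeasurableSet C := measurableSet_Ioi.inter hTmeas
  have hAC : A ∪ C = T := by
    rw [hA_def, hC_def, ← Set.union_inter_distrib_right, Set.Iic_union_Ioi, Set.univ_inter]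
  have hACdisj : Disjoint A C := by
    refine Set.disjoint_left.mpr fun x hxA hxC => ?_
    exact absurd (Set.mem_Ioi.mp hxC.1) (not_lt.mpr (Set.mem_Iic.mp hxA.1))
  -- A has positive Lebesgue measure
  have hvolA : 0 < volume A := by
    obtain ⟨ε, hε, hball⟩ := Metric.isOpen_iff.mp hTopen w hw
    have hsub : Set.Ioc (w - ε) w ⊆ A := by
      intro x hx
      refine ⟨hx.2, hball ?_⟩
      rw [Metric.mem_ball, Real.dist_eq, abs_lt]
      constructor <;> linarith [hx.1, hx.2]
    calc (0 : ℝ≥0∞) < volume (Set.Ioc (w - ε) w) := by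
          rw [Real.volume_Ioc]; simp [ENNReal.ofReal_pos]; linarith
      _ ≤ volume A := measure_mono hsub
  have hvolT : 0 < volume T := hvolA.trans_le (measure_mono Set.inter_subset_right)
  -- positivity of gaussian measures
  have hgpos : ∀ (θ : ℝ) (s : Set ℝ), 0 < volume s → 0 < gaussianReal θ v s := by
    intro θ s hs
    by_contra h
    push_neg at h
    have h0 : gaussianReal θ v s = 0 := le_antisymm h zero_le
    exact absurd ((gaussianReal_absolutelyContinuous' θ hv0) h0) hs.ne'
  -- expressing the cdf via integrals
  have hcdf : ∀ θ : ℝ, truncNormalCDF ς T θ w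
      = (∫ x in A, gaussianPDFReal θ v x) / (∫ x in T, gaussianPDFReal θ v x) := by
    intro θ
    rw [truncNormalCDF, gaussianReal_apply_eq_integral θ hv0, gaussianReal_apply_eq_integral θ hv0,
      ENNReal.toReal_ofReal (setIntegral_nonneg hAmeas fun x _ => gaussianPDFReal_nonneg _ _ _),
      ENNReal.toReal_ofReal (setIntegral_nonneg hTmeas fun x _ => gaussianPDFReal_nonneg _ _ _)]
  -- positivity of the integrals
  have hintpos : ∀ (θ : ℝ) (s : Set ℝ), MeasurableSet s → 0 < volume s →
      0 < ∫ x in s, gaussianPDFReal θ v x := by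
    intro θ s hsm hs
    have h1 := hgpos θ s hs
    have h2 : gaussianReal θ v s ≠ ⊤ := measure_ne_top _ _
    have := ENNReal.toReal_pos h1.ne' h2
    rwa [gaussianReal_apply_eq_integral θ hv0,
      ENNReal.toReal_ofReal (setIntegral_nonneg hsm fun x _ => gaussianPDFReal_nonneg _ _ _)] at this
  -- antitonicity of θ ↦ truncNormalCDF ς T θ w
  have hanti : ∀ θ1 θ2 : ℝ, θ1 ≤ θ2 → truncNormalCDF ς T θ2 w ≤ truncNormalCDF ς T θ1 w := by
    intro θ1 θ2 hθ
    rw [hcdf, hcdf]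
    have hT1 : 0 < ∫ x in T, gaussianPDFReal θ1 v x := hintpos θ1 T hTmeas hvolT
    have hT2 : 0 < ∫ x in T, gaussianPDFReal θ2 v x := hintpos θ2 T hTmeas hvolT
    rw [div_le_div_iff₀ hT2 hT1]
    have hsplit : ∀ θ : ℝ, ∫ x in T, gaussianPDFReal θ v x
        = (∫ x in A, gaussianPDFReal θ v x) + ∫ x in C, gaussianPDFReal θ v x := by
      intro θ
      rw [← hAC, setIntegral_union hACdisj hCmeas
        (integrable_gaussianPDFReal θ v).integrableOn (integrable_gaussianPDFReal θ v).integrableOn]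
    rw [hsplit, hsplit]
    have key := cross_integral v hv hθ hAmeas hCmeas
      (Set.inter_subset_left : A ⊆ Set.Iic w) (Set.inter_subset_left : C ⊆ Set.Ioi w)
    nlinarith [key, setIntegral_nonneg (μ := volume) hAmeas fun x _ => gaussianPDFReal_nonneg θ1 v x,
      setIntegral_nonneg (μ := volume) hAmeas fun x _ => gaussianPDFReal_nonneg θ2 v x]
  -- conclusion
  intro γ1 hγ1 γ2 hγ2 hlt
  by_contra h
  push_neg at h
  have hle : Q γ1 ≤ Q γ2 := h
  have := hanti (Q γ1) (Q γ2) hle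
  rw [hQ γ1 hγ1, hQ γ2 hγ2] at this
  exact absurd this (not_le.mpr hlt)
end

section
/- If b_K < ∞, then for each γ ∈ (0,1), (b_K − w)·Q_γ(w) → −ς² log(γ) as w increases to b_K along T. -/
open Filter MeasureTheory ProbabilityTheory Set

namespace Stmt6Aux
open Real



noncomputable def pdf (ς θ x : ℝ) : ℝ := gaussianPDFReal θ (Real.toNNReal (ς^2)) x
noncomputable def nu (ς θ : ℝ) (S : Set ℝ) : ℝ := ∫ x in S, pdf ς θ x
noncomputable def Wt (ς θ t : ℝ) : ℝ := nu ς θ (Set.Iic t)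

variable {ς : ℝ}

lemma coeV (hς : 0 < ς) : ((Real.toNNReal (ς^2)) : ℝ) = ς^2 :=
  Real.coe_toNNReal _ (sq_nonneg ς)

lemma vne (hς : 0 < ς) : Real.toNNReal (ς^2) ≠ 0 := by
  simp only [ne_eq, Real.toNNReal_eq_zero, not_le]
  positivity

lemma pdf_eq (hς : 0 < ς) (θ x : ℝ) :
    pdf ς θ x = (Real.sqrt (2 * π * ς^2))⁻¹ * Real.exp (- (x - θ)^2 / (2 * ς^2)) := by
  rw [pdf, gaussianPDFReal, coeV hς]

lemma pdf_pos (hς : 0 < ς) (θ x : ℝ) : 0 < pdf ς θ x :=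
  gaussianPDFReal_pos _ _ _ (vne hς)

lemma pdf_nonneg (ς θ x : ℝ) : 0 ≤ pdf ς θ x := gaussianPDFReal_nonneg _ _ _

lemma integrable_pdf (ς θ : ℝ) : Integrable (pdf ς θ) := integrable_gaussianPDFReal _ _

lemma integrableOn_pdf (ς θ : ℝ) (S : Set ℝ) : IntegrableOn (pdf ς θ) S :=
  (integrable_pdf ς θ).integrableOn

lemma nu_nonneg (ς θ : ℝ) (S : Set ℝ) : 0 ≤ nu ς θ S :=
  integral_nonneg fun x => pdf_nonneg ς θ x

lemma nu_mono (ς θ : ℝ) {S S' : Set ℝ} (h : S ⊆ S') : nu ς θ S ≤ nu ς θ S' :=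
  setIntegral_mono_set (integrableOn_pdf ς θ S') (ae_of_all _ fun x => pdf_nonneg ς θ x)
    (HasSubset.Subset.eventuallyLE h)

lemma nu_Ioc (ς θ : ℝ) {s t : ℝ} (h : s ≤ t) :
    nu ς θ (Ioc s t) = Wt ς θ t - Wt ς θ s := by
  rw [Wt, Wt, nu, nu, nu, intervalIntegral.integral_Iic_sub_Iic (integrableOn_pdf ς θ _) (integrableOn_pdf ς θ _),
    intervalIntegral.integral_of_le h]

lemma nu_Ioo (ς θ : ℝ) {s t : ℝ} (h : s ≤ t) :
    nu ς θ (Ioo s t) = Wt ς θ t - Wt ς θ s := by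
  rw [← nu_Ioc ς θ h, nu, nu]
  exact setIntegral_congr_set Ioo_ae_eq_Ioc

lemma nu_Ioo_pos (hς : 0 < ς) (θ : ℝ) {s t : ℝ} (h : s < t) : 0 < nu ς θ (Ioo s t) := by
  have h1 : (0:ℝ) < ∫ x in s..t, pdf ς θ x :=
    intervalIntegral.intervalIntegral_pos_of_pos_on
      ((integrable_pdf ς θ).intervalIntegrable) (fun x _ => pdf_pos hς θ x) h
  rwa [intervalIntegral.integral_of_le h.le, ← nu, nu_Ioc ς θ h.le, ← nu_Ioo ς θ h.le] at h1

lemma nu_pos_of_Ioo_subset (hς : 0 < ς) (θ : ℝ) {s t : ℝ} (h : s < t) {S : Set ℝ}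
    (hS : Ioo s t ⊆ S) : 0 < nu ς θ S :=
  lt_of_lt_of_le (nu_Ioo_pos hς θ h) (nu_mono ς θ hS)

lemma Wt_pos (hς : 0 < ς) (θ t : ℝ) : 0 < Wt ς θ t :=
  nu_pos_of_Ioo_subset hς θ (show t - 1 < t by linarith) (fun x hx => le_of_lt hx.2)

lemma pdf_ratio (hς : 0 < ς) (θ1 θ2 x : ℝ) :
    pdf ς θ2 x = pdf ς θ1 x * Real.exp ((θ2 - θ1) * (2*x - θ1 - θ2) / (2 * ς^2)) := by
  rw [pdf_eq hς, pdf_eq hς, mul_assoc ((Real.sqrt (2 * π * ς^2))⁻¹), ← Real.exp_add]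
  congr 1
  have h : ς^2 ≠ 0 := by positivity
  field_simp
  ring

lemma pdf_shift (hς : 0 < ς) (θ x δ : ℝ) :
    pdf ς θ (x - δ) = pdf ς θ x * Real.exp ((2*δ*(x - θ) - δ^2) / (2 * ς^2)) := by
  rw [pdf_eq hς, pdf_eq hς, mul_assoc ((Real.sqrt (2 * π * ς^2))⁻¹), ← Real.exp_add]
  congr 1
  have h : ς^2 ≠ 0 := by positivity
  field_simp
  ring

lemma Wt_shift_int (ς θ t δ : ℝ) : Wt ς θ (t - δ) = ∫ x in Iic t, pdf ς θ (x - δ) := by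
  have key : ∀ x : ℝ, (Iic (t - δ)).indicator (pdf ς θ) x
      = (Iic t).indicator (fun y => pdf ς θ (y - δ)) (x + δ) := by
    intro x
    simp only [Set.indicator_apply, mem_Iic, add_sub_cancel_right]
    rcases le_or_gt x (t - δ) with h | h
    · rw [if_pos h, if_pos (by linarith)]
    · rw [if_neg (by linarith), if_neg (by linarith)]
  calc Wt ς θ (t - δ) = ∫ x, (Iic (t - δ)).indicator (pdf ς θ) x := by
        rw [Wt, nu, integral_indicator measurableSet_Iic]
    _ = ∫ x, (Iic t).indicator (fun y => pdf ς θ (y - δ)) (x + δ) := by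
        simp_rw [key]
    _ = ∫ x, (Iic t).indicator (fun y => pdf ς θ (y - δ)) x :=
        integral_add_right_eq_self _ δ
    _ = ∫ x in Iic t, pdf ς θ (x - δ) := integral_indicator measurableSet_Iic

lemma integrableOn_pdf_shift (ς θ δ : ℝ) (S : Set ℝ) :
    IntegrableOn (fun x => pdf ς θ (x - δ)) S := by
  have : (fun x => pdf ς θ (x - δ)) = pdf ς (θ + δ) := by
    ext x; rw [pdf, pdf, gaussianPDFReal_sub]
  rw [this]; exact integrableOn_pdf ς (θ + δ) S

lemma Wt_shift_le (hς : 0 < ς) (θ t : ℝ) {δ : ℝ} (hδ : 0 ≤ δ) :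
    Wt ς θ (t - δ) ≤ Real.exp ((2*δ*(t - θ) - δ^2) / (2 * ς^2)) * Wt ς θ t := by
  rw [Wt_shift_int]
  calc ∫ x in Iic t, pdf ς θ (x - δ)
      ≤ ∫ x in Iic t, pdf ς θ x * Real.exp ((2*δ*(t - θ) - δ^2) / (2 * ς^2)) := by
        apply setIntegral_mono_on (integrableOn_pdf_shift ς θ δ _)
          ((integrableOn_pdf ς θ _).mul_const _) measurableSet_Iic
        intro x hx
        rw [pdf_shift hς]
        have : (2*δ*(x - θ) - δ^2) / (2 * ς^2) ≤ (2*δ*(t - θ) - δ^2) / (2 * ς^2) := by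
          apply (div_le_div_iff_of_pos_right (by positivity : (0:ℝ) < 2 * ς^2)).mpr
          nlinarith [mem_Iic.mp hx]
        exact mul_le_mul_of_nonneg_left (Real.exp_le_exp.mpr this) (pdf_nonneg ς θ x)
    _ = Real.exp ((2*δ*(t - θ) - δ^2) / (2 * ς^2)) * Wt ς θ t := by
        rw [integral_mul_const, Wt, nu, mul_comm]

lemma Wt_diff_ge (hς : 0 < ς) (θ t : ℝ) {δ s : ℝ} (hδ : 0 ≤ δ) (hs : 0 ≤ s) :
    Real.exp ((2*δ*(t - s - θ) - δ^2) / (2 * ς^2)) * (Wt ς θ t - Wt ς θ (t - s))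
      ≤ Wt ς θ (t - δ) := by
  rw [Wt_shift_int ς θ t δ]
  have hsub : t - s ≤ t := by linarith
  have h1 : Wt ς θ t - Wt ς θ (t - s) = ∫ x in Ioc (t - s) t, pdf ς θ x :=
    (nu_Ioc ς θ hsub).symm
  rw [h1]
  calc Real.exp ((2*δ*(t - s - θ) - δ^2) / (2 * ς^2)) * ∫ x in Ioc (t - s) t, pdf ς θ x
      = ∫ x in Ioc (t - s) t, pdf ς θ x * Real.exp ((2*δ*(t - s - θ) - δ^2) / (2 * ς^2)) := by
        rw [integral_mul_const, mul_comm]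
    _ ≤ ∫ x in Ioc (t - s) t, pdf ς θ (x - δ) := by
        apply setIntegral_mono_on ((integrableOn_pdf ς θ _).mul_const _)
          (integrableOn_pdf_shift ς θ δ _) measurableSet_Ioc
        intro x hx
        rw [pdf_shift hς]
        have : (2*δ*(t - s - θ) - δ^2) / (2 * ς^2) ≤ (2*δ*(x - θ) - δ^2) / (2 * ς^2) := by
          apply (div_le_div_iff_of_pos_right (by positivity : (0:ℝ) < 2 * ς^2)).mpr
          nlinarith [hx.1]
        exact mul_le_mul_of_nonneg_left (Real.exp_le_exp.mpr this) (pdf_nonneg ς θ x)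
    _ ≤ ∫ x in Iic t, pdf ς θ (x - δ) := by
        apply setIntegral_mono_set (integrableOn_pdf_shift ς θ δ _)
          (ae_of_all _ fun x => pdf_nonneg ς θ _)
          (HasSubset.Subset.eventuallyLE fun x hx => mem_Iic.mpr hx.2)



/-- Monotone likelihood ratio comparison. -/
lemma compare (hς : 0 < ς) {θ1 θ2 w : ℝ} (h12 : θ1 ≤ θ2) {A B : Set ℝ}
    (hA : MeasurableSet A) (hAw : A ⊆ Iic w) (hB : MeasurableSet B) (hBw : B ⊆ Ioi w) :
    nu ς θ1 B * nu ς θ2 A ≤ nu ς θ2 B * nu ς θ1 A := by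
  set c := Real.exp ((θ2 - θ1) * (2*w - θ1 - θ2) / (2 * ς^2)) with hc
  have hint2 : ∀ S : Set ℝ, IntegrableOn (fun x => pdf ς θ1 x
      * Real.exp ((θ2 - θ1) * (2*x - θ1 - θ2) / (2 * ς^2))) S := by
    intro S
    have : (fun x => pdf ς θ1 x * Real.exp ((θ2 - θ1) * (2*x - θ1 - θ2) / (2 * ς^2)))
        = pdf ς θ2 := by ext x; rw [← pdf_ratio hς]
    rw [this]; exact integrableOn_pdf ς θ2 S
  have h1 : nu ς θ2 A ≤ c * nu ς θ1 A := by
    calc nu ς θ2 A = ∫ x in A, pdf ς θ1 x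
          * Real.exp ((θ2 - θ1) * (2*x - θ1 - θ2) / (2 * ς^2)) := by
          rw [nu]; exact setIntegral_congr_fun hA fun x _ => pdf_ratio hς θ1 θ2 x
      _ ≤ ∫ x in A, pdf ς θ1 x * c := by
          apply setIntegral_mono_on (hint2 A) ((integrableOn_pdf ς θ1 A).mul_const _) hA
          intro x hx
          apply mul_le_mul_of_nonneg_left _ (pdf_nonneg ς θ1 x)
          apply Real.exp_le_exp.mpr
          apply (div_le_div_iff_of_pos_right (by positivity : (0:ℝ) < 2 * ς^2)).mpr
          nlinarith [mem_Iic.mp (hAw hx)]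
      _ = c * nu ς θ1 A := by rw [integral_mul_const, nu, mul_comm]
  have h2 : c * nu ς θ1 B ≤ nu ς θ2 B := by
    calc c * nu ς θ1 B = ∫ x in B, pdf ς θ1 x * c := by rw [integral_mul_const, nu, mul_comm]
      _ ≤ ∫ x in B, pdf ς θ1 x
          * Real.exp ((θ2 - θ1) * (2*x - θ1 - θ2) / (2 * ς^2)) := by
          apply setIntegral_mono_on ((integrableOn_pdf ς θ1 B).mul_const _) (hint2 B) hB
          intro x hx
          apply mul_le_mul_of_nonneg_left _ (pdf_nonneg ς θ1 x)
          apply Real.exp_le_exp.mpr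
          apply (div_le_div_iff_of_pos_right (by positivity : (0:ℝ) < 2 * ς^2)).mpr
          nlinarith [mem_Ioi.mp (hBw hx)]
      _ = nu ς θ2 B := by
          rw [nu]; exact (setIntegral_congr_fun hB fun x _ => pdf_ratio hς θ1 θ2 x).symm
  calc nu ς θ1 B * nu ς θ2 A ≤ nu ς θ1 B * (c * nu ς θ1 A) :=
        mul_le_mul_of_nonneg_left h1 (nu_nonneg ς θ1 B)
    _ = (c * nu ς θ1 B) * nu ς θ1 A := by ring
    _ ≤ nu ς θ2 B * nu ς θ1 A :=
        mul_le_mul_of_nonneg_right h2 (nu_nonneg ς θ1 A)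

variable {α : Type*} {l : Filter α}

/-- Relative tail with a fixed positive shift tends to zero. -/
lemma ratio_fixed (hς : 0 < ς) (t : ℝ) {s : ℝ} (hs : 0 < s) {θf : α → ℝ}
    (hθ : Tendsto θf l atTop) :
    Tendsto (fun x => Wt ς (θf x) (t - s) / Wt ς (θf x) t) l (nhds 0) := by
  have hup : ∀ x, Wt ς (θf x) (t - s) / Wt ς (θf x) t
      ≤ Real.exp ((2*s*(t - θf x) - s^2) / (2 * ς^2)) := by
    intro x
    rw [div_le_iff₀ (Wt_pos hς (θf x) t)]
    exact Wt_shift_le hς (θf x) t hs.le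
  have hlo : ∀ x, (0:ℝ) ≤ Wt ς (θf x) (t - s) / Wt ς (θf x) t := fun x =>
    div_nonneg (le_of_lt (Wt_pos hς _ _)) (le_of_lt (Wt_pos hς _ _))
  have hexp : Tendsto (fun x => Real.exp ((2*s*(t - θf x) - s^2) / (2 * ς^2))) l (nhds 0) := by
    apply Real.tendsto_exp_atBot.comp
    apply Tendsto.atBot_div_const (by positivity : (0:ℝ) < 2 * ς^2)
    have h1 : Tendsto (fun x => 2*s*θf x) l atTop := hθ.const_mul_atTop (by positivity)
    have h2 : Tendsto (fun x => (2*s*t - s^2) + -(2*s*θf x)) l atBot :=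
      tendsto_atBot_add_const_left l _ (tendsto_neg_atTop_atBot.comp h1)
    exact h2.congr fun x => by ring
  exact tendsto_of_tendsto_of_tendsto_of_le_of_le' tendsto_const_nhds hexp
    (Eventually.of_forall hlo) (Eventually.of_forall hup)

/-- Main tail-ratio limit. -/
lemma ratio_lim (hς : 0 < ς) (t c : ℝ) {θf dd : α → ℝ}
    (hd0 : Tendsto dd l (nhds 0)) (hdpos : ∀ᶠ x in l, 0 < dd x)
    (hmul : Tendsto (fun x => θf x * dd x) l (nhds c)) (hθ : Tendsto θf l atTop) :
    Tendsto (fun x => Wt ς (θf x) (t - dd x) / Wt ς (θf x) t) l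
      (nhds (Real.exp (-(c / ς^2)))) := by
  set U : α → ℝ := fun x => Real.exp ((2*dd x*(t - θf x) - (dd x)^2) / (2 * ς^2)) with hU
  set L : α → ℝ := fun x => Real.exp ((2*dd x*(t - 1 - θf x) - (dd x)^2) / (2 * ς^2))
    * (1 - Wt ς (θf x) (t - 1) / Wt ς (θf x) t) with hL
  have hexp_gen : ∀ (e : ℝ), Tendsto (fun x => (2*dd x*(t - e - θf x) - (dd x)^2) / (2 * ς^2)) l
      (nhds (-(c/ς^2))) := by
    intro e
    have h1 : Tendsto (fun x => (2*(dd x)*(t - e) - 2*(θf x * dd x) - (dd x)^2) / (2 * ς^2)) l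
        (nhds ((2*0*(t-e) - 2*c - 0^2) / (2 * ς^2))) := by
      apply Tendsto.div_const
      exact (((hd0.const_mul 2).mul_const (t-e)).sub (hmul.const_mul 2)).sub (hd0.pow 2)
    have h2 : (2*0*(t-e) - 2*c - (0:ℝ)^2) / (2 * ς^2) = -(c/ς^2) := by
      field_simp
      ring
    rw [h2] at h1
    exact h1.congr fun x => by ring_nf
  have hUlim : Tendsto U l (nhds (Real.exp (-(c/ς^2)))) := by
    have := hexp_gen 0
    simp only [sub_zero] at this
    exact (Real.continuous_exp.tendsto _).comp this
  have hLlim : Tendsto L l (nhds (Real.exp (-(c/ς^2)))) := by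
    have h1 : Tendsto (fun x => Real.exp ((2*dd x*(t - 1 - θf x) - (dd x)^2) / (2 * ς^2))) l
        (nhds (Real.exp (-(c/ς^2)))) := (Real.continuous_exp.tendsto _).comp (hexp_gen 1)
    have h2 : Tendsto (fun x => 1 - Wt ς (θf x) (t - 1) / Wt ς (θf x) t) l (nhds 1) := by
      have := (ratio_fixed hς t one_pos hθ).const_sub 1
      simpa using this
    have := h1.mul h2
    simpa using this
  have hle1 : ∀ᶠ x in l, L x ≤ Wt ς (θf x) (t - dd x) / Wt ς (θf x) t := by
    filter_upwards [hdpos] with x hx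
    have hW := Wt_pos hς (θf x) t
    have := Wt_diff_ge hς (θf x) t hx.le (zero_le_one) (s := 1)
    show Real.exp ((2*dd x*(t - 1 - θf x) - (dd x)^2) / (2 * ς^2))
        * (1 - Wt ς (θf x) (t - 1) / Wt ς (θf x) t) ≤ _
    have h2 : 1 - Wt ς (θf x) (t - 1) / Wt ς (θf x) t
        = (Wt ς (θf x) t - Wt ς (θf x) (t - 1)) / Wt ς (θf x) t := by
      field_simp
    rw [h2, ← mul_div_assoc]
    exact (div_le_div_iff_of_pos_right hW).mpr this
  have hle2 : ∀ᶠ x in l, Wt ς (θf x) (t - dd x) / Wt ς (θf x) t ≤ U x := by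
    filter_upwards [hdpos] with x hx
    rw [hU, div_le_iff₀ (Wt_pos hς (θf x) t)]
    exact Wt_shift_le hς (θf x) t hx.le
  exact tendsto_of_tendsto_of_tendsto_of_le_of_le' hLlim hUlim hle1 hle2

end Stmt6Aux

namespace Stmt6Aux


lemma truncCDF_eq {ς : ℝ} (hς : 0 < ς) (T : Set ℝ) (θ w : ℝ) :
    truncNormalCDF ς T θ w = nu ς θ (Iic w ∩ T) / nu ς θ T := by
  have hv : Real.toNNReal (ς ^ 2) ≠ 0 := by
    rw [show ς ^ 2 = ς^2 from rfl]; exact vne hς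
  rw [truncNormalCDF, gaussianReal_apply_eq_integral _ hv _,
    gaussianReal_apply_eq_integral _ hv _,
    ENNReal.toReal_ofReal (integral_nonneg fun x => gaussianPDFReal_nonneg _ _ _),
    ENNReal.toReal_ofReal (integral_nonneg fun x => gaussianPDFReal_nonneg _ _ _)]
  rfl

end Stmt6Aux

open Stmt6Aux

/-- If `b_K < ∞`, then for each `γ ∈ (0,1)`,
`(b_K − w)·Q_γ(w) → −ς²·log γ` as `w` increases to `b_K` along `T`. -/
theorem stmt_6
    (ς : ℝ) (hς : 0 < ς) (K : ℕ) (hK : 1 ≤ K) (a b : ℕ → EReal)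
    (hab : ∀ i < K, a i < b i) (hba : ∀ i, i + 1 < K → b i < a (i + 1))
    (T : Set ℝ)
    (hT : T = ⋃ i ∈ Finset.range K, {x : ℝ | a i < (x : EReal) ∧ (x : EReal) < b i})
    (hbK : b (K - 1) ≠ ⊤)
    (γ : ℝ) (hγ : γ ∈ Set.Ioo (0 : ℝ) 1) (Q : ℝ → ℝ)
    (hQ : ∀ w ∈ T, truncNormalCDF ς T (Q w) w = γ) :
    Tendsto (fun w : ℝ => ((b (K - 1)).toReal - w) * Q w)
      (nhdsWithin ((b (K - 1)).toReal) T) (nhds (-(ς ^ 2 * Real.log γ))) := by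

  obtain ⟨hγ0, hγ1⟩ := hγ
  have hKK : K - 1 < K := by omega
  have habK := hab (K-1) hKK
  have hbot : b (K-1) ≠ ⊥ := ne_bot_of_gt habK
  set bK : ℝ := (b (K-1)).toReal with hbKdef
  have hcoe : ((bK : ℝ) : EReal) = b (K-1) := EReal.coe_toReal hbK hbot
  have h1 : a (K-1) < ((bK:ℝ):EReal) := by rw [hcoe]; exact habK
  obtain ⟨z, hz1, hz2⟩ := exists_between h1
  have hzt : z ≠ ⊤ := ne_top_of_lt hz2
  have hzb : z ≠ ⊥ := ne_bot_of_gt hz1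
  set p : ℝ := z.toReal with hpdef
  have hpz : ((p:ℝ):EReal) = z := EReal.coe_toReal hzt hzb
  have hap : a (K-1) < (p:EReal) := by rw [hpz]; exact hz1
  have hpbK : p < bK := by rw [← EReal.coe_lt_coe_iff, hpz]; exact hz2
  set q : ℝ := (p + bK)/2 with hqdef
  have hpq : p < q := by rw [hqdef]; linarith
  have hqbK : q < bK := by rw [hqdef]; linarith
  have hmono : ∀ n i, i + n < K → b i ≤ b (i + n) := by
    intro n
    induction n with
    | zero => intro i _; simp
    | succ m ih =>
      intro i h
      have h1 : b i ≤ b (i + m) := ih i (by omega)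
      have h2 : b (i + m) < a (i + m + 1) := hba (i + m) (by omega)
      have h3 : a (i + m + 1) < b (i + m + 1) := hab (i + m + 1) (by omega)
      exact h1.trans (h2.trans h3).le
  have hble : ∀ i, i < K → b i ≤ b (K-1) := by
    intro i hi
    have h := hmono (K - 1 - i) i (by omega)
    rwa [show i + (K-1-i) = K-1 by omega] at h
  have hTopen : IsOpen T := by
    rw [hT]; apply isOpen_biUnion; intro i _
    have : {x : ℝ | a i < (x:EReal) ∧ (x:EReal) < b i}
        = ((↑) : ℝ → EReal)⁻¹' (Ioi (a i)) ∩ ((↑) : ℝ → EReal)⁻¹' (Iio (b i)) := rfl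
    rw [this]
    exact (isOpen_Ioi.preimage continuous_coe_real_ereal).inter
      (isOpen_Iio.preimage continuous_coe_real_ereal)
  have hTmeas : MeasurableSet T := hTopen.measurableSet
  have hTsub : T ⊆ Iio bK := by
    rw [hT]; intro x hx
    simp only [Finset.mem_range, mem_iUnion, mem_setOf_eq] at hx
    obtain ⟨i, hiK, _, hx2⟩ := hx
    have : (x:EReal) < (bK:EReal) := lt_of_lt_of_le hx2 (by rw [hcoe]; exact hble i hiK)
    exact mem_Iio.mpr (EReal.coe_lt_coe_iff.mp this)
  have hIooT : Ioo p bK ⊆ T := by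
    intro x hx
    rw [hT]
    simp only [Finset.mem_range, mem_iUnion, mem_setOf_eq]
    refine ⟨K-1, hKK, lt_trans hap (EReal.coe_lt_coe_iff.mpr hx.1), ?_⟩
    rw [← hcoe]; exact EReal.coe_lt_coe_iff.mpr hx.2
  set l := nhdsWithin bK T with hldef
  set Lc : ℝ := -(ς^2 * Real.log γ) with hLdef
  have hlogγ : Real.log γ < 0 := Real.log_neg hγ0 hγ1
  have hς2 : (0:ℝ) < ς^2 := by positivity
  have hL : 0 < Lc := by rw [hLdef]; nlinarith
  rw [Metric.tendsto_nhds]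
  intro ε hε
  set ε' := min (ε/2) (Lc/2) with hεdef
  have hε'0 : 0 < ε' := lt_min (by linarith) (by linarith)
  have hε'L : ε' < Lc := (min_le_right _ _).trans_lt (by linarith)
  have hε'ε : ε' < ε := (min_le_left _ _).trans_lt (by linarith)
  have hev1 : ∀ᶠ w in l, w ∈ Ioo q bK := by
    have ha1 : ∀ᶠ w in l, w ∈ T := self_mem_nhdsWithin
    have ha2 : ∀ᶠ w in l, q < w := (eventually_gt_nhds hqbK).filter_mono nhdsWithin_le_nhds
    filter_upwards [ha1, ha2] with w hw1 hw2
    exact ⟨hw2, hTsub hw1⟩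
  have hd0 : Tendsto (fun w => bK - w) l (nhds 0) := by
    have h2 : Tendsto (fun w : ℝ => bK - w) (nhds bK) (nhds (bK - bK)) :=
      (continuous_const.sub continuous_id).tendsto bK
    rw [sub_self] at h2
    exact h2.mono_left nhdsWithin_le_nhds
  have hdpos : ∀ᶠ w in l, 0 < bK - w := hev1.mono fun w hw => sub_pos.mpr hw.2
  have hdIoi : Tendsto (fun w => bK - w) l (nhdsWithin 0 (Ioi 0)) :=
    tendsto_nhdsWithin_iff.mpr ⟨hd0, hdpos⟩
  have hinv : Tendsto (fun w => (bK - w)⁻¹) l atTop := tendsto_inv_nhdsGT_zero.comp hdIoi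
  set θm : ℝ → ℝ := fun w => (Lc - ε')/(bK - w) with hθmdef
  set θp : ℝ → ℝ := fun w => (Lc + ε')/(bK - w) with hθpdef
  have hθmtop : Tendsto θm l atTop := by
    simp only [hθmdef, div_eq_mul_inv]; exact hinv.const_mul_atTop (by linarith)
  have hθptop : Tendsto θp l atTop := by
    simp only [hθpdef, div_eq_mul_inv]; exact hinv.const_mul_atTop (by linarith)
  have hmulm : Tendsto (fun w => θm w * (bK - w)) l (nhds (Lc - ε')) := by
    apply Tendsto.congr' _ (tendsto_const_nhds (α := ℝ) (f := l))
    filter_upwards [hdpos] with w hw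
    rw [hθmdef]; exact (div_mul_cancel₀ _ (ne_of_gt hw)).symm
  have hmulp : Tendsto (fun w => θp w * (bK - w)) l (nhds (Lc + ε')) := by
    apply Tendsto.congr' _ (tendsto_const_nhds (α := ℝ) (f := l))
    filter_upwards [hdpos] with w hw
    rw [hθpdef]; exact (div_mul_cancel₀ _ (ne_of_gt hw)).symm
  have hbKdd : ∀ w : ℝ, bK - (bK - w) = w := fun w => by ring
  set γm := Real.exp (-((Lc - ε')/ς^2)) with hγmdef
  set γp := Real.exp (-((Lc + ε')/ς^2)) with hγpdef
  have hρm : Tendsto (fun w => Wt ς (θm w) w / Wt ς (θm w) bK) l (nhds γm) := by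
    have h2 := ratio_lim hς bK (Lc - ε') hd0 hdpos hmulm hθmtop
    simpa only [hbKdd] using h2
  have hρp : Tendsto (fun w => Wt ς (θp w) w / Wt ς (θp w) bK) l (nhds γp) := by
    have h2 := ratio_lim hς bK (Lc + ε') hd0 hdpos hmulp hθptop
    simpa only [hbKdd] using h2
  have hρqm : Tendsto (fun w => Wt ς (θm w) q / Wt ς (θm w) bK) l (nhds 0) := by
    have h2 := ratio_fixed hς bK (show 0 < bK - q by linarith) hθmtop
    simpa only [show bK - (bK - q) = q by ring] using h2
  have hlog : Real.log γ = -(Lc/ς^2) := by rw [hLdef]; field_simp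
  have hγexp : γ = Real.exp (-(Lc/ς^2)) := by rw [← hlog, Real.exp_log hγ0]
  have hγγm : γ < γm := by
    rw [hγexp, hγmdef]
    apply Real.exp_lt_exp.mpr
    rw [neg_lt_neg_iff]
    exact (div_lt_div_iff_of_pos_right hς2).mpr (by linarith)
  have hγpγ : γp < γ := by
    rw [hγexp, hγpdef]
    apply Real.exp_lt_exp.mpr
    rw [neg_lt_neg_iff]
    exact (div_lt_div_iff_of_pos_right hς2).mpr (by linarith)
  have hγp0 : 0 < γp := Real.exp_pos _
  have hA : ∀ᶠ w in l, γ * (Wt ς (θm w) bK - Wt ς (θm w) w)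
      < (1-γ) * (Wt ς (θm w) w - Wt ς (θm w) q) := by
    have hlhs : Tendsto (fun w => γ * (1 - Wt ς (θm w) w / Wt ς (θm w) bK)) l
        (nhds (γ * (1 - γm))) := (hρm.const_sub 1).const_mul γ
    have hrhs : Tendsto (fun w => (1-γ) * (Wt ς (θm w) w / Wt ς (θm w) bK
        - Wt ς (θm w) q / Wt ς (θm w) bK)) l (nhds ((1-γ)*(γm - 0))) :=
      (hρm.sub hρqm).const_mul (1-γ)
    have hlt : γ * (1 - γm) < (1-γ)*(γm - 0) := by nlinarith
    filter_upwards [hlhs.eventually_lt hrhs hlt] with w hw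
    have hWpos := Wt_pos hς (θm w) bK
    have h3 := mul_lt_mul_of_pos_right hw hWpos
    calc γ * (Wt ς (θm w) bK - Wt ς (θm w) w)
        = γ * (1 - Wt ς (θm w) w / Wt ς (θm w) bK) * Wt ς (θm w) bK := by
          field_simp
      _ < (1-γ) * (Wt ς (θm w) w / Wt ς (θm w) bK
          - Wt ς (θm w) q / Wt ς (θm w) bK) * Wt ς (θm w) bK := h3
      _ = (1-γ) * (Wt ς (θm w) w - Wt ς (θm w) q) := by
          field_simp
  have hB : ∀ᶠ w in l, (1-γ) * Wt ς (θp w) w < γ * (Wt ς (θp w) bK - Wt ς (θp w) w) := by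
    have hlhs : Tendsto (fun w => (1-γ) * (Wt ς (θp w) w / Wt ς (θp w) bK)) l
        (nhds ((1-γ) * γp)) := hρp.const_mul (1-γ)
    have hrhs : Tendsto (fun w => γ * (1 - Wt ς (θp w) w / Wt ς (θp w) bK)) l
        (nhds (γ * (1 - γp))) := (hρp.const_sub 1).const_mul γ
    have hlt : (1-γ) * γp < γ * (1 - γp) := by nlinarith
    filter_upwards [hlhs.eventually_lt hrhs hlt] with w hw
    have hWpos := Wt_pos hς (θp w) bK
    have h3 := mul_lt_mul_of_pos_right hw hWpos
    calc (1-γ) * Wt ς (θp w) w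
        = (1-γ) * (Wt ς (θp w) w / Wt ς (θp w) bK) * Wt ς (θp w) bK := by
          field_simp
      _ < γ * (1 - Wt ς (θp w) w / Wt ς (θp w) bK) * Wt ς (θp w) bK := h3
      _ = γ * (Wt ς (θp w) bK - Wt ς (θp w) w) := by field_simp
  filter_upwards [hev1, hA, hB, self_mem_nhdsWithin] with w hw hAw hBw hwT
  have hq_w : q < w := hw.1
  have hw_bK : w < bK := hw.2
  set Im := T ∩ Iic w with hImdef
  set Ip := T ∩ Ioi w with hIpdef
  have hIm_meas : MeasurableSet Im := hTmeas.inter measurableSet_Iic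
  have hIp_meas : MeasurableSet Ip := hTmeas.inter measurableSet_Ioi
  have hIpsub : Ip ⊆ Ioi w := inter_subset_right
  have hImsub : Im ⊆ Iic w := inter_subset_right
  have hIp_eq : Ip = Ioo w bK := by
    ext x
    constructor
    · rintro ⟨hxT, hxw⟩; exact ⟨hxw, hTsub hxT⟩
    · rintro ⟨hx1, hx2⟩; exact ⟨hIooT ⟨lt_trans (lt_trans hpq hq_w) hx1, hx2⟩, hx1⟩
  have hIooqw : Ioo q w ⊆ Im := fun x hx =>
    ⟨hIooT ⟨lt_trans hpq hx.1, lt_trans hx.2 hw_bK⟩, le_of_lt hx.2⟩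
  have hνT : 0 < nu ς (Q w) T := nu_pos_of_Ioo_subset hς _ hpbK hIooT
  have hQw := hQ w hwT
  rw [truncCDF_eq hς] at hQw
  have hsplit : nu ς (Q w) T = nu ς (Q w) Im + nu ς (Q w) Ip := by
    have hdisj : Disjoint Im Ip :=
      (Iic_disjoint_Ioi le_rfl).mono inter_subset_right inter_subset_right
    have hunion : Im ∪ Ip = T := by
      rw [hImdef, hIpdef, ← inter_union_distrib_left, Iic_union_Ioi, inter_univ]
    rw [nu, ← hunion, setIntegral_union hdisj hIp_meas
      (integrableOn_pdf ς (Q w) _) (integrableOn_pdf ς (Q w) _)]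
    rfl
  have hγeq : γ * nu ς (Q w) Ip = (1-γ) * nu ς (Q w) Im := by
    have h2 : nu ς (Q w) Im = γ * nu ς (Q w) T := by
      have h3 := (div_eq_iff (ne_of_gt hνT)).mp hQw
      rwa [inter_comm, ← hImdef] at h3
    rw [hsplit, mul_add] at h2
    rw [sub_mul, one_mul]
    linarith
  have hνIm_pos : 0 < nu ς (Q w) Im := nu_pos_of_Ioo_subset hς _ hq_w hIooqw
  have hIp_val : ∀ θ, nu ς θ Ip = Wt ς θ bK - Wt ς θ w := fun θ => by
    rw [hIp_eq, nu_Ioo ς θ hw_bK.le]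
  have hIm_le : ∀ θ, nu ς θ Im ≤ Wt ς θ w := fun θ => nu_mono ς θ hImsub
  have hIm_ge : ∀ θ, Wt ς θ w - Wt ς θ q ≤ nu ς θ Im := fun θ => by
    rw [← nu_Ioo ς θ hq_w.le]; exact nu_mono ς θ hIooqw
  have hc1 : θm w < Q w := by
    by_contra hcon
    push_neg at hcon
    have hcomp := compare hς hcon hIm_meas hImsub hIp_meas hIpsub
    have h2 : (1-γ) * nu ς (Q w) Im * nu ς (θm w) Im
        ≤ γ * (nu ς (θm w) Ip * nu ς (Q w) Im) := by
      calc (1-γ) * nu ς (Q w) Im * nu ς (θm w) Im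
          = γ * (nu ς (Q w) Ip * nu ς (θm w) Im) := by rw [← hγeq]; ring
        _ ≤ γ * (nu ς (θm w) Ip * nu ς (Q w) Im) :=
            mul_le_mul_of_nonneg_left hcomp hγ0.le
    have h3 : (1-γ) * nu ς (θm w) Im ≤ γ * nu ς (θm w) Ip := by
      apply le_of_mul_le_mul_right _ hνIm_pos
      calc (1-γ) * nu ς (θm w) Im * nu ς (Q w) Im
          = (1-γ) * nu ς (Q w) Im * nu ς (θm w) Im := by ring
        _ ≤ γ * (nu ς (θm w) Ip * nu ς (Q w) Im) := h2
        _ = γ * nu ς (θm w) Ip * nu ς (Q w) Im := by ring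
    have h4 : γ * nu ς (θm w) Ip < (1-γ) * nu ς (θm w) Im := by
      calc γ * nu ς (θm w) Ip = γ * (Wt ς (θm w) bK - Wt ς (θm w) w) := by rw [hIp_val]
        _ < (1-γ) * (Wt ς (θm w) w - Wt ς (θm w) q) := hAw
        _ ≤ (1-γ) * nu ς (θm w) Im :=
            mul_le_mul_of_nonneg_left (hIm_ge _) (by linarith)
    linarith
  have hc2 : Q w < θp w := by
    by_contra hcon
    push_neg at hcon
    have hcomp := compare hς hcon hIm_meas hImsub hIp_meas hIpsub
    have h3 : γ * nu ς (θp w) Ip ≤ (1-γ) * nu ς (θp w) Im := by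
      apply le_of_mul_le_mul_right _ hνIm_pos
      calc γ * nu ς (θp w) Ip * nu ς (Q w) Im
          = γ * (nu ς (θp w) Ip * nu ς (Q w) Im) := by ring
        _ ≤ γ * (nu ς (Q w) Ip * nu ς (θp w) Im) :=
            mul_le_mul_of_nonneg_left hcomp hγ0.le
        _ = (γ * nu ς (Q w) Ip) * nu ς (θp w) Im := by ring
        _ = ((1-γ) * nu ς (Q w) Im) * nu ς (θp w) Im := by rw [hγeq]
        _ = (1-γ) * nu ς (θp w) Im * nu ς (Q w) Im := by ring
    have h4 : (1-γ) * nu ς (θp w) Im < γ * nu ς (θp w) Ip := by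
      calc (1-γ) * nu ς (θp w) Im ≤ (1-γ) * Wt ς (θp w) w :=
            mul_le_mul_of_nonneg_left (hIm_le _) (by linarith)
        _ < γ * (Wt ς (θp w) bK - Wt ς (θp w) w) := hBw
        _ = γ * nu ς (θp w) Ip := by rw [hIp_val]
    linarith
  have hdw : 0 < bK - w := sub_pos.mpr hw_bK
  have e1 : θm w * (bK - w) = Lc - ε' := by
    rw [hθmdef]; exact div_mul_cancel₀ _ (ne_of_gt hdw)
  have e2 : θp w * (bK - w) = Lc + ε' := by
    rw [hθpdef]; exact div_mul_cancel₀ _ (ne_of_gt hdw)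
  have k1 : Lc - ε' < (bK - w) * Q w := by
    have h2 := mul_lt_mul_of_pos_right hc1 hdw
    rw [e1] at h2
    linarith [h2, mul_comm (Q w) (bK - w)]
  have k2 : (bK - w) * Q w < Lc + ε' := by
    have h2 := mul_lt_mul_of_pos_right hc2 hdw
    rw [e2] at h2
    linarith [h2, mul_comm (Q w) (bK - w)]
  rw [Real.dist_eq, abs_sub_lt_iff]
  constructor <;> linarith
end

section
/- If a_1 > −∞, then for each γ ∈ (0,1), (a_1 − w)·Q_γ(w) → −ς² log(1 − γ) as w decreases to a_1 along T. -/
open Filter MeasureTheory ProbabilityTheory Set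

open Real

lemma exp_int_Ioi (r c : ℝ) (hr : 0 < r) : ∫ x in Ioi c, Real.exp (-(r*(x-c))) = 1/r := by
  have h1 : (fun x : ℝ => Real.exp (-(r*(x-c)))) = fun x => Real.exp (r*c) * Real.exp (-(r*x)) := by
    ext x; rw [← Real.exp_add]; ring_nf
  rw [h1, integral_const_mul]
  have h2 : ∫ x in Ioi c, Real.exp (-(r*x)) = r⁻¹ * Real.exp (-(r*c)) := by
    have := integral_comp_mul_left_Ioi (fun x => Real.exp (-x)) c hr
    simp only [smul_eq_mul] at this
    rw [this, integral_exp_neg_Ioi]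
  rw [h2, ← mul_assoc, mul_comm (Real.exp (r*c)), mul_assoc, ← Real.exp_add]
  simp [one_div]

lemma exp_int_Ioc (r c d : ℝ) (hr : r ≠ 0) (hcd : c ≤ d) :
    ∫ x in Ioc c d, Real.exp (-(r*(x-c))) = (1 - Real.exp (-(r*(d-c))))/r := by
  rw [← intervalIntegral.integral_of_le hcd]
  have : ∀ x ∈ Set.uIcc c d, HasDerivAt (fun y => -Real.exp (-(r*(y-c)))/r) (Real.exp (-(r*(x-c)))) x := by
    intro x _
    have h : HasDerivAt (fun y : ℝ => -(r*(y-c))) (-r) x := by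
      simpa [Pi.neg_def] using (((hasDerivAt_id x).sub_const c).const_mul r).neg
    have h2 := (h.exp.div_const r).neg
    have e1 : (fun y => -Real.exp (-(r*(y-c)))/r) = -fun x => Real.exp (-(r*(x-c)))/r := by
      ext y; simp only [Pi.neg_apply]; ring
    have e2 : Real.exp (-(r*(x-c))) = -(Real.exp (-(r*(x-c))) * -r / r) := by
      rw [mul_neg, neg_div, neg_neg, mul_div_assoc, div_self hr, mul_one]
    rw [e1, e2]; exact h2
  rw [intervalIntegral.integral_eq_sub_of_hasDerivAt this]
  · simp only [sub_self, mul_zero, neg_zero, Real.exp_zero]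
    field_simp
    ring_nf
  · apply Continuous.intervalIntegrable; continuity

lemma exp_int_Ioc_nonneg (r c d : ℝ) (hr : 0 < r) (hcd : c ≤ d) :
    0 ≤ (1 - Real.exp (-(r*(d-c))))/r := by
  apply div_nonneg _ hr.le
  have : Real.exp (-(r*(d-c))) ≤ 1 := by
    rw [Real.exp_le_one_iff]
    nlinarith
  linarith


lemma gauss_eq (σ2 : ℝ) (hσ2 : 0 < σ2) (θ A x : ℝ) :
    gaussianPDFReal θ σ2.toNNReal x
      = gaussianPDFReal θ σ2.toNNReal A *
        Real.exp (-((A - θ)/σ2 * (x - A)) - (x-A)^2/(2*σ2)) := by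
  unfold gaussianPDFReal
  rw [Real.coe_toNNReal _ hσ2.le]
  have h : Real.exp (-(A-θ)^2/(2*σ2)) * Real.exp (-((A - θ)/σ2 * (x - A)) - (x-A)^2/(2*σ2))
      = Real.exp (-(x-θ)^2/(2*σ2)) := by
    rw [← Real.exp_add]
    congr 1
    field_simp
    ring
  rw [← h]
  ring

lemma gauss_pos_s7 (σ2 : ℝ) (hσ2 : 0 < σ2) (θ x : ℝ) : 0 < gaussianPDFReal θ σ2.toNNReal x :=
  gaussianPDFReal_pos _ _ _ (by simp [Real.toNNReal_eq_zero]; linarith)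

lemma gauss_le (σ2 : ℝ) (hσ2 : 0 < σ2) (θ A x : ℝ) (hx : A ≤ x) :
    gaussianPDFReal θ σ2.toNNReal x
      ≤ gaussianPDFReal θ σ2.toNNReal A * Real.exp (-((A - θ)/σ2 * (x - A))) := by
  rw [gauss_eq σ2 hσ2 θ A x]
  apply mul_le_mul_of_nonneg_left _ (gauss_pos_s7 σ2 hσ2 θ A).le
  apply Real.exp_le_exp.mpr
  have : 0 ≤ (x-A)^2/(2*σ2) := by positivity
  linarith

lemma gauss_ge (σ2 : ℝ) (hσ2 : 0 < σ2) (θ A x d : ℝ) (hx : A ≤ x) (hxd : x ≤ A + d) :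
    gaussianPDFReal θ σ2.toNNReal A * Real.exp (-(d^2/(2*σ2)))
        * Real.exp (-((A - θ)/σ2 * (x - A)))
      ≤ gaussianPDFReal θ σ2.toNNReal x := by
  rw [gauss_eq σ2 hσ2 θ A x, mul_assoc, ← Real.exp_add]
  apply mul_le_mul_of_nonneg_left _ (gauss_pos_s7 σ2 hσ2 θ A).le
  apply Real.exp_le_exp.mpr
  have h1 : (x-A)^2 ≤ d^2 := by nlinarith
  have h2 : (x-A)^2/(2*σ2) ≤ d^2/(2*σ2) := by gcongr
  linarith

lemma gauss_mono (σ2 : ℝ) (hσ2 : 0 < σ2) (θ x y : ℝ) (h1 : x ≤ y) (h2 : y ≤ θ) :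
    gaussianPDFReal θ σ2.toNNReal x ≤ gaussianPDFReal θ σ2.toNNReal y := by
  unfold gaussianPDFReal
  rw [Real.coe_toNNReal _ hσ2.le]
  apply mul_le_mul_of_nonneg_left _ (by positivity)
  apply Real.exp_le_exp.mpr
  have : (y-θ)^2 ≤ (x-θ)^2 := by nlinarith
  have h3 : (y-θ)^2/(2*σ2) ≤ (x-θ)^2/(2*σ2) := by gcongr
  rw [neg_div, neg_div]
  linarith

lemma gauss_le_max (σ2 : ℝ) (hσ2 : 0 < σ2) (θ x : ℝ) :
    gaussianPDFReal θ σ2.toNNReal x ≤ (√(2 * π * σ2))⁻¹ := by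
  unfold gaussianPDFReal
  rw [Real.coe_toNNReal _ hσ2.le]
  have h1 : Real.exp (-(x - θ)^2/(2*σ2)) ≤ 1 := by
    rw [Real.exp_le_one_iff, neg_div]
    have : 0 ≤ (x-θ)^2/(2*σ2) := by positivity
    linarith
  nlinarith [Real.sqrt_pos.mpr (show 0 < 2*π*σ2 by positivity), inv_pos.mpr (Real.sqrt_pos.mpr (show 0 < 2*π*σ2 by positivity))]

lemma gauss_ge_of_close (σ2 : ℝ) (hσ2 : 0 < σ2) (θ x Z : ℝ) (h : |x - θ| ≤ Z) :
    (√(2 * π * σ2))⁻¹ * Real.exp (-(Z^2/(2*σ2))) ≤ gaussianPDFReal θ σ2.toNNReal x := by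
  unfold gaussianPDFReal
  rw [Real.coe_toNNReal _ hσ2.le]
  apply mul_le_mul_of_nonneg_left _ (by positivity)
  apply Real.exp_le_exp.mpr
  have h1 : (x-θ)^2 ≤ Z^2 := sq_le_sq' (by cases abs_le.mp h; linarith) (abs_le.mp h).2
  have h4 : (x-θ)^2/(2*σ2) ≤ Z^2/(2*σ2) := by gcongr
  have heq : -(x - θ)^2/(2*σ2) = -((x-θ)^2/(2*σ2)) := by ring
  rw [heq]
  linarith


lemma exp_shift_integrableOn_Ioi (r A : ℝ) (hr : 0 < r) :
    IntegrableOn (fun x => Real.exp (-(r*(x-A)))) (Ioi A) := by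
  have h : (fun x : ℝ => Real.exp (-(r*(x-A)))) = fun x => Real.exp (r*A) * Real.exp (-r*x) := by
    ext x; rw [← Real.exp_add]; ring_nf
  rw [h]
  exact (exp_neg_integrableOn_Ioi A hr).const_mul _

lemma gauss_integrableOn (σ2 : ℝ) (θ : ℝ) (s : Set ℝ) :
    IntegrableOn (gaussianPDFReal θ σ2.toNNReal) s :=
  (integrable_gaussianPDFReal θ _).integrableOn

lemma int_Ioi_le (σ2 : ℝ) (hσ2 : 0 < σ2) (θ A : ℝ) (hr : 0 < (A - θ)/σ2) :
    ∫ x in Ioi A, gaussianPDFReal θ σ2.toNNReal x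
      ≤ gaussianPDFReal θ σ2.toNNReal A * (1/((A - θ)/σ2)) := by
  set r := (A - θ)/σ2 with hrdef
  calc ∫ x in Ioi A, gaussianPDFReal θ σ2.toNNReal x
      ≤ ∫ x in Ioi A, gaussianPDFReal θ σ2.toNNReal A * Real.exp (-(r*(x-A))) := by
        apply setIntegral_mono_on (gauss_integrableOn σ2 θ _)
          (((exp_shift_integrableOn_Ioi r A hr).const_mul _)) measurableSet_Ioi
        intro x hx
        exact gauss_le σ2 hσ2 θ A x (le_of_lt hx)
    _ = gaussianPDFReal θ σ2.toNNReal A * (1/r) := by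
        rw [integral_const_mul, exp_int_Ioi r A hr]

lemma int_Ioc_le (σ2 : ℝ) (hσ2 : 0 < σ2) (θ A w : ℝ) (hr : 0 < (A - θ)/σ2) (hw : A ≤ w) :
    ∫ x in Ioc A w, gaussianPDFReal θ σ2.toNNReal x
      ≤ gaussianPDFReal θ σ2.toNNReal A
        * ((1 - Real.exp (-((A - θ)/σ2*(w-A))))/((A - θ)/σ2)) := by
  set r := (A - θ)/σ2 with hrdef
  calc ∫ x in Ioc A w, gaussianPDFReal θ σ2.toNNReal x
      ≤ ∫ x in Ioc A w, gaussianPDFReal θ σ2.toNNReal A * Real.exp (-(r*(x-A))) := by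
        apply setIntegral_mono_on (gauss_integrableOn σ2 θ _)
          (Integrable.const_mul (Continuous.integrableOn_Ioc (f := fun x : ℝ => Real.exp (-(r*(x-A)))) (by continuity)) _) measurableSet_Ioc
        intro x hx
        exact gauss_le σ2 hσ2 θ A x (le_of_lt hx.1)
    _ = gaussianPDFReal θ σ2.toNNReal A * ((1 - Real.exp (-(r*(w-A))))/r) := by
        rw [integral_const_mul, exp_int_Ioc r A w hr.ne' hw]

lemma int_Ioc_ge (σ2 : ℝ) (hσ2 : 0 < σ2) (θ A w : ℝ) (hr : 0 < (A - θ)/σ2) (hw : A ≤ w) :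
    gaussianPDFReal θ σ2.toNNReal A * Real.exp (-((w-A)^2/(2*σ2)))
        * ((1 - Real.exp (-((A - θ)/σ2*(w-A))))/((A - θ)/σ2))
      ≤ ∫ x in Ioc A w, gaussianPDFReal θ σ2.toNNReal x := by
  set r := (A - θ)/σ2 with hrdef
  calc gaussianPDFReal θ σ2.toNNReal A * Real.exp (-((w-A)^2/(2*σ2))) * ((1 - Real.exp (-(r*(w-A))))/r)
      = ∫ x in Ioc A w, gaussianPDFReal θ σ2.toNNReal A * Real.exp (-((w-A)^2/(2*σ2)))
          * Real.exp (-(r*(x-A))) := by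
        rw [integral_const_mul, exp_int_Ioc r A w hr.ne' hw]
    _ ≤ ∫ x in Ioc A w, gaussianPDFReal θ σ2.toNNReal x := by
        apply setIntegral_mono_on
          (Integrable.const_mul (Continuous.integrableOn_Ioc (f := fun x : ℝ => Real.exp (-(r*(x-A)))) (by continuity)) _)
          (gauss_integrableOn σ2 θ _) measurableSet_Ioc
        intro x hx
        exact gauss_ge σ2 hσ2 θ A x (w - A) hx.1.le (by linarith [hx.2])



lemma int_mono_set (σ2 : ℝ) (θ : ℝ) {s t : Set ℝ} (h : s ⊆ t) :
    ∫ x in s, gaussianPDFReal θ σ2.toNNReal x ≤ ∫ x in t, gaussianPDFReal θ σ2.toNNReal x := by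
  apply setIntegral_mono_set (gauss_integrableOn σ2 θ t)
    (ae_of_all _ fun x => gaussianPDFReal_nonneg _ _ _) (HasSubset.Subset.eventuallyLE h)

lemma int_pos (σ2 : ℝ) (hσ2 : 0 < σ2) (θ A m : ℝ) (hAm : A < m) :
    0 < ∫ x in Ioc A m, gaussianPDFReal θ σ2.toNNReal x := by
  rw [setIntegral_pos_iff_support_of_nonneg_ae
    (ae_of_all _ fun x => gaussianPDFReal_nonneg _ _ _) (gauss_integrableOn σ2 θ _)]
  have hsupp : (Function.support (gaussianPDFReal θ σ2.toNNReal)) = univ := by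
    ext x; simp [Function.mem_support, (gauss_pos_s7 σ2 hσ2 θ x).ne']
  rw [hsupp, univ_inter, Real.volume_Ioc]
  simp [hAm]

lemma gauss_toReal (ς : ℝ) (hς : 0 < ς) (θ : ℝ) (s : Set ℝ) :
    ((gaussianReal θ (Real.toNNReal (ς ^ 2))) s).toReal
      = ∫ x in s, gaussianPDFReal θ (ς^2).toNNReal x := by
  have hv : (ς^2).toNNReal ≠ 0 := by
    simp [Real.toNNReal_eq_zero]
    positivity
  rw [gaussianReal_apply_eq_integral θ hv s, ENNReal.toReal_ofReal]
  exact integral_nonneg fun x => gaussianPDFReal_nonneg _ _ _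

set_option maxHeartbeats 2000000 in
/-- If `a_1 > −∞`, then for each `γ ∈ (0,1)`,
`(a_1 − w)·Q_γ(w) → −ς²·log(1 − γ)` as `w` decreases to `a_1` along `T`. -/
theorem stmt_7
    (ς : ℝ) (hς : 0 < ς) (K : ℕ) (hK : 1 ≤ K) (a b : ℕ → EReal)
    (hab : ∀ i < K, a i < b i) (hba : ∀ i, i + 1 < K → b i < a (i + 1))
    (T : Set ℝ)
    (hT : T = ⋃ i ∈ Finset.range K, {x : ℝ | a i < (x : EReal) ∧ (x : EReal) < b i})
    (ha1 : a 0 ≠ ⊥)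
    (γ : ℝ) (hγ : γ ∈ Set.Ioo (0 : ℝ) 1) (Q : ℝ → ℝ)
    (hQ : ∀ w ∈ T, truncNormalCDF ς T (Q w) w = γ) :
    Tendsto (fun w : ℝ => ((a 0).toReal - w) * Q w)
      (nhdsWithin ((a 0).toReal) T) (nhds (-(ς ^ 2 * Real.log (1 - γ)))) := by
  obtain ⟨hγ0, hγ1⟩ := hγ
  set σ2 : ℝ := ς ^ 2 with hσ2def
  have hσ2 : 0 < σ2 := by positivity
  set A : ℝ := (a 0).toReal with hAdef
  have ha0top : a 0 ≠ ⊤ := ne_top_of_lt (hab 0 hK)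
  have hA : (A : EReal) = a 0 := EReal.coe_toReal ha0top ha1
  -- T ⊆ Ioi A
  have hmono : ∀ i < K, a 0 ≤ a i := by
    intro i hi
    induction i with
    | zero => exact le_refl _
    | succ n ih =>
      have hn : n < K := Nat.lt_of_succ_lt hi
      exact le_trans (ih hn) (le_trans (hab n hn).le (hba n hi).le)
  have hTsub : T ⊆ Ioi A := by
    intro x hx
    rw [hT] at hx
    simp only [Finset.mem_range, mem_iUnion, mem_setOf_eq] at hx
    obtain ⟨i, hiK, hxi, _⟩ := hx
    have : (A : EReal) < (x : EReal) := lt_of_le_of_lt (hA ▸ hmono i hiK) hxi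
    exact EReal.coe_lt_coe_iff.mp this
  -- Ioc A (A + M0) ⊆ T
  obtain ⟨M0, hM0, hM0T⟩ : ∃ M0 : ℝ, 0 < M0 ∧ Ioc A (A + M0) ⊆ T := by
    have hmem : ∀ x : ℝ, a 0 < (x : EReal) → (x : EReal) < b 0 → x ∈ T := by
      intro x h1 h2
      rw [hT]
      simp only [Finset.mem_range, mem_iUnion, mem_setOf_eq]
      exact ⟨0, hK, h1, h2⟩
    by_cases hb : b 0 = ⊤
    · refine ⟨1, one_pos, fun x hx => hmem x ?_ ?_⟩
      · rw [← hA]; exact_mod_cast hx.1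
      · rw [hb]; exact EReal.coe_lt_top x
    · have hbbot : b 0 ≠ ⊥ := ne_bot_of_gt (hab 0 hK)
      set B : ℝ := (b 0).toReal with hBdef
      have hB : (B : EReal) = b 0 := EReal.coe_toReal hb hbbot
      have hAB : A < B := by
        rw [← EReal.coe_lt_coe_iff, hA, hB]
        exact hab 0 hK
      refine ⟨(B - A)/2, by linarith, fun x hx => hmem x ?_ ?_⟩
      · rw [← hA]; exact_mod_cast hx.1
      · rw [← hB]
        have : x < B := by
          have := hx.2; linarith
        exact_mod_cast this
  -- the basic equation
  have hTpos : ∀ θ : ℝ, 0 < ∫ x in T, gaussianPDFReal θ σ2.toNNReal x := fun θ =>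
    lt_of_lt_of_le (int_pos σ2 hσ2 θ A (A + M0) (by linarith)) (int_mono_set σ2 θ hM0T)
  have hEq : ∀ w ∈ T, A < w → w ≤ A + M0 →
      (∫ x in Ioc A w, gaussianPDFReal (Q w) σ2.toNNReal x)
        = γ * ∫ x in T, gaussianPDFReal (Q w) σ2.toNNReal x := by
    intro w hw hAw hwM
    have hIic : Iic w ∩ T = Ioc A w := by
      ext x
      constructor
      · rintro ⟨hx1, hx2⟩
        exact ⟨hTsub hx2, hx1⟩
      · rintro ⟨hx1, hx2⟩
        exact ⟨hx2, hM0T ⟨hx1, by linarith⟩⟩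
    have := hQ w hw
    rw [truncNormalCDF, gauss_toReal ς hς, gauss_toReal ς hς, hIic] at this
    rw [div_eq_iff (hTpos (Q w)).ne'] at this
    exact this
  -- crude bound
  have hC : ∀ X : ℝ, 0 < X → ∀ᶠ w in nhdsWithin A T, X ≤ A - Q w := by
    intro X hX
    set Cmax : ℝ := (√(2 * π * σ2))⁻¹ with hCmaxdef
    have hCmax : 0 < Cmax := by positivity
    set c0 : ℝ := Cmax * Real.exp (-((M0+X)^2/(2*σ2))) with hc0def
    have hc0 : 0 < c0 := by positivity
    set δ : ℝ := min (M0/2) (min (γ * (c0 * M0) / (2*Cmax)) (γ * M0/4)) with hδdef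
    have hδpos : 0 < δ := by
      apply lt_min (by linarith)
      apply lt_min
      · positivity
      · positivity
    have hδ1 : δ ≤ M0/2 := min_le_left _ _
    have hδ2 : δ ≤ γ * (c0 * M0) / (2*Cmax) := le_trans (min_le_right _ _) (min_le_left _ _)
    have hδ3 : δ ≤ γ * M0/4 := le_trans (min_le_right _ _) (min_le_right _ _)
    have hlt : ∀ᶠ w in nhdsWithin A T, w < A + δ :=
      (eventually_lt_nhds (by linarith : A < A + δ)).filter_mono nhdsWithin_le_nhds
    filter_upwards [eventually_mem_nhdsWithin, hlt] with w hw hwδ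
    have hAw : A < w := hTsub hw
    by_contra hcon
    push_neg at hcon
    set θ : ℝ := Q w with hθdef
    have hθA : A - X < θ := by linarith
    have hEqw := hEq w hw hAw (by linarith)
    have hD : 0 < ∫ x in T, gaussianPDFReal θ σ2.toNNReal x := hTpos θ
    have hNle : (∫ x in Ioc A w, gaussianPDFReal θ σ2.toNNReal x) ≤ Cmax * (w - A) := by
      calc (∫ x in Ioc A w, gaussianPDFReal θ σ2.toNNReal x)
          ≤ ∫ _ in Ioc A w, Cmax := by
            apply setIntegral_mono_on (gauss_integrableOn σ2 θ _)
              (integrableOn_const (by simp [Real.volume_Ioc]))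
              measurableSet_Ioc
            intro x _
            exact gauss_le_max σ2 hσ2 θ x
        _ = Cmax * (w - A) := by
            rw [setIntegral_const, Real.volume_real_Ioc_of_le (by linarith)]
            simp [mul_comm]
    rcases le_or_gt θ (A + M0) with hθM | hθM
    · -- middle case
      have hDge : c0 * M0 ≤ ∫ x in T, gaussianPDFReal θ σ2.toNNReal x := by
        calc c0 * M0 = ∫ _ in Ioc A (A + M0), c0 := by
              rw [setIntegral_const, Real.volume_real_Ioc_of_le (by linarith)]
              simp [mul_comm]
          _ ≤ ∫ x in Ioc A (A + M0), gaussianPDFReal θ σ2.toNNReal x := by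
              apply setIntegral_mono_on
                (integrableOn_const (by simp [Real.volume_Ioc]))
                (gauss_integrableOn σ2 θ _) measurableSet_Ioc
              intro x hx
              apply gauss_ge_of_close σ2 hσ2 θ x (M0 + X)
              rw [abs_le]
              constructor <;> [skip; skip] <;>
                [ (have := hx.1; have := hx.2; nlinarith);
                  (have := hx.1; have := hx.2; nlinarith) ]
          _ ≤ _ := int_mono_set σ2 θ hM0T
      have : γ * (c0 * M0) ≤ Cmax * (w - A) := by
        calc γ * (c0 * M0) ≤ γ * ∫ x in T, gaussianPDFReal θ σ2.toNNReal x := by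
              apply mul_le_mul_of_nonneg_left hDge hγ0.le
          _ = ∫ x in Ioc A w, gaussianPDFReal θ σ2.toNNReal x := hEqw.symm
          _ ≤ Cmax * (w - A) := hNle
      have hcontr : Cmax * (w - A) < γ * (c0 * M0) := by
        have h1 : w - A < δ := by linarith
        have h2 : Cmax * (w - A) < Cmax * δ := by
          apply mul_lt_mul_of_pos_left h1 hCmax
        have h3 : Cmax * δ ≤ γ * (c0 * M0) / 2 := by
          calc Cmax * δ ≤ Cmax * (γ * (c0*M0)/(2*Cmax)) := mul_le_mul_of_nonneg_left hδ2 hCmax.le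
            _ = γ * (c0*M0)/2 := by field_simp
        have h4 : γ * (c0 * M0) / 2 < γ * (c0 * M0) := by
          have : 0 < γ * (c0 * M0) := by positivity
          linarith
        linarith
      linarith
    · -- far right case
      have hwθ : w ≤ θ := by linarith
      have hfw : 0 < gaussianPDFReal θ σ2.toNNReal w := gauss_pos_s7 σ2 hσ2 θ w
      have hNle2 : (∫ x in Ioc A w, gaussianPDFReal θ σ2.toNNReal x)
          ≤ (w - A) * gaussianPDFReal θ σ2.toNNReal w := by
        calc (∫ x in Ioc A w, gaussianPDFReal θ σ2.toNNReal x)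
            ≤ ∫ _ in Ioc A w, gaussianPDFReal θ σ2.toNNReal w := by
              apply setIntegral_mono_on (gauss_integrableOn σ2 θ _)
                (integrableOn_const (by simp [Real.volume_Ioc]))
                measurableSet_Ioc
              intro x hx
              exact gauss_mono σ2 hσ2 θ x w hx.2 hwθ
          _ = (w - A) * gaussianPDFReal θ σ2.toNNReal w := by
              rw [setIntegral_const, Real.volume_real_Ioc_of_le (by linarith)]
              simp
      have hDge2 : (A + M0 - w) * gaussianPDFReal θ σ2.toNNReal w
          ≤ ∫ x in T, gaussianPDFReal θ σ2.toNNReal x := by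
        calc (A + M0 - w) * gaussianPDFReal θ σ2.toNNReal w
            = ∫ _ in Ioc w (A + M0), gaussianPDFReal θ σ2.toNNReal w := by
              rw [setIntegral_const, Real.volume_real_Ioc_of_le (by linarith)]
              simp
          _ ≤ ∫ x in Ioc w (A + M0), gaussianPDFReal θ σ2.toNNReal x := by
              apply setIntegral_mono_on
                (integrableOn_const (by simp [Real.volume_Ioc]))
                (gauss_integrableOn σ2 θ _) measurableSet_Ioc
              intro x hx
              exact gauss_mono σ2 hσ2 θ w x hx.1.le (by linarith [hx.2])
          _ ≤ ∫ x in Ioc A (A + M0), gaussianPDFReal θ σ2.toNNReal x :=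
              int_mono_set σ2 θ (fun x hx => ⟨by linarith [hx.1], hx.2⟩)
          _ ≤ _ := int_mono_set σ2 θ hM0T
      have hkey : γ * ((A + M0 - w) * gaussianPDFReal θ σ2.toNNReal w)
          ≤ (w - A) * gaussianPDFReal θ σ2.toNNReal w := by
        calc γ * ((A + M0 - w) * gaussianPDFReal θ σ2.toNNReal w)
            ≤ γ * ∫ x in T, gaussianPDFReal θ σ2.toNNReal x :=
              mul_le_mul_of_nonneg_left hDge2 hγ0.le
          _ = ∫ x in Ioc A w, gaussianPDFReal θ σ2.toNNReal x := hEqw.symm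
          _ ≤ (w - A) * gaussianPDFReal θ σ2.toNNReal w := hNle2
      have h5 : w - A < δ := by linarith
      have h6 : M0/2 ≤ A + M0 - w := by linarith
      have h7 : γ * (M0/2) * gaussianPDFReal θ σ2.toNNReal w
          ≤ γ * ((A + M0 - w) * gaussianPDFReal θ σ2.toNNReal w) := by
        rw [mul_assoc]
        apply mul_le_mul_of_nonneg_left _ hγ0.le
        exact mul_le_mul_of_nonneg_right h6 hfw.le
      have h8 : (w - A) * gaussianPDFReal θ σ2.toNNReal w
          < δ * gaussianPDFReal θ σ2.toNNReal w := mul_lt_mul_of_pos_right h5 hfw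
      have h9 : δ * gaussianPDFReal θ σ2.toNNReal w
          ≤ (γ * M0/4) * gaussianPDFReal θ σ2.toNNReal w :=
        mul_le_mul_of_nonneg_right hδ3 hfw.le
      have h10 : (γ * M0/4) * gaussianPDFReal θ σ2.toNNReal w
          < γ * (M0/2) * gaussianPDFReal θ σ2.toNNReal w := by
        apply mul_lt_mul_of_pos_right _ hfw
        nlinarith
      linarith
  -- main asymptotics
  have hγ1' : (0:ℝ) < 1 - γ := by linarith
  have hτexp : Real.exp (-(-Real.log (1 - γ))) = 1 - γ := by
    rw [neg_neg]; exact Real.exp_log hγ1'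
  have ht : Tendsto (fun w => (w - A) * ((A - Q w)/σ2)) (nhdsWithin A T)
      (nhds (-Real.log (1 - γ))) := by
    rw [tendsto_order]
    constructor
    · -- lower bound direction
      intro c hc
      have hq' : 1 - Real.exp (-c) < γ := by
        have : Real.exp (-(-Real.log (1-γ))) < Real.exp (-c) :=
          Real.exp_lt_exp.mpr (by linarith)
        rw [hτexp] at this; linarith
      -- choose m'
      have hcont : Continuous (fun m' : ℝ => γ * Real.exp (-(m'^2/(2*σ2)))) := by continuity
      have htend1 : Tendsto (fun m' : ℝ => γ * Real.exp (-(m'^2/(2*σ2)))) (nhdsWithin 0 (Ioi 0)) (nhds γ) := by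
        have h0 : γ * Real.exp (-((0:ℝ)^2/(2*σ2))) = γ := by norm_num
        have := (hcont.tendsto 0).mono_left (nhdsWithin_le_nhds (s := Ioi (0:ℝ)))
        rwa [h0] at this
      obtain ⟨m', hm'1, hm'0, hm'M⟩ :=
        (((htend1.eventually (eventually_gt_nhds hq')).and
          (eventually_mem_nhdsWithin.and
            ((eventually_lt_nhds hM0).filter_mono nhdsWithin_le_nhds)))).exists
      rw [mem_Ioi] at hm'0
      -- choose X
      have hX0 : Tendsto (fun X : ℝ => -(X/σ2 * m')) atTop atBot := by
        have h1 : Tendsto (fun X : ℝ => X * (m'/σ2)) atTop atTop :=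
          Tendsto.atTop_mul_const (by positivity) tendsto_id
        have h2 := tendsto_neg_atBot_iff.mpr h1
        apply h2.congr
        intro X; ring
      have hexp0 : Tendsto (fun X : ℝ => Real.exp (-(X/σ2 * m'))) atTop (nhds 0) :=
        Real.tendsto_exp_atBot.comp hX0
      have htend2 : Tendsto (fun X : ℝ => γ * Real.exp (-(m'^2/(2*σ2))) * (1 - Real.exp (-(X/σ2 * m'))))
          atTop (nhds (γ * Real.exp (-(m'^2/(2*σ2))) * (1 - 0))) :=
        tendsto_const_nhds.mul (tendsto_const_nhds.sub hexp0)
      have hq'2 : 1 - Real.exp (-c) < γ * Real.exp (-(m'^2/(2*σ2))) * (1 - 0) := by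
        rw [sub_zero, mul_one]; exact hm'1
      obtain ⟨X, hXprop, hX1⟩ :=
        ((htend2.eventually (eventually_gt_nhds hq'2)).and (eventually_gt_atTop 0)).exists
      -- main estimate
      filter_upwards [eventually_mem_nhdsWithin, hC X hX1,
        (eventually_lt_nhds (by linarith : A < A + M0)).filter_mono nhdsWithin_le_nhds]
        with w hw hXw hwM
      have hAw : A < w := hTsub hw
      set θ : ℝ := Q w with hθdef
      set r : ℝ := (A - θ)/σ2 with hrdef
      have hrX : X/σ2 ≤ r := by rw [hrdef]; gcongr
      have hrpos : 0 < r := lt_of_lt_of_le (by positivity) hrX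
      have hEqw := hEq w hw hAw hwM.le
      set P : ℝ := gaussianPDFReal θ σ2.toNNReal A with hPdef
      have hP : 0 < P := gauss_pos_s7 σ2 hσ2 θ A
      have key1 : γ * ∫ x in T, gaussianPDFReal θ σ2.toNNReal x
          ≤ P * ((1 - Real.exp (-(r*(w-A))))/r) := by
        rw [← hEqw]
        exact int_Ioc_le σ2 hσ2 θ A w hrpos hAw.le
      have key2 : P * Real.exp (-(m'^2/(2*σ2))) * ((1 - Real.exp (-(r*m')))/r)
          ≤ ∫ x in T, gaussianPDFReal θ σ2.toNNReal x := by
        have h1 := int_Ioc_ge σ2 hσ2 θ A (A + m') hrpos (by linarith)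
        rw [add_sub_cancel_left] at h1
        exact le_trans h1 (int_mono_set σ2 θ (fun x hx => hM0T ⟨hx.1, by linarith [hx.2]⟩))
      have key3 : γ * (Real.exp (-(m'^2/(2*σ2))) * (1 - Real.exp (-(r*m'))))
          ≤ 1 - Real.exp (-(r*(w-A))) := by
        have hchain : γ * (P * Real.exp (-(m'^2/(2*σ2))) * ((1 - Real.exp (-(r*m')))/r))
            ≤ P * ((1 - Real.exp (-(r*(w-A))))/r) :=
          le_trans (mul_le_mul_of_nonneg_left key2 hγ0.le) key1
        have h2 : γ * (P * Real.exp (-(m'^2/(2*σ2))) * ((1 - Real.exp (-(r*m')))/r))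
            = (γ * (Real.exp (-(m'^2/(2*σ2))) * (1 - Real.exp (-(r*m'))))) * (P * r⁻¹) := by
          rw [div_eq_mul_inv]; ring
        have h3 : P * ((1 - Real.exp (-(r*(w-A))))/r)
            = (1 - Real.exp (-(r*(w-A)))) * (P * r⁻¹) := by
          rw [div_eq_mul_inv]; ring
        rw [h2, h3] at hchain
        exact le_of_mul_le_mul_right hchain (by positivity)
      have hmono2 : Real.exp (-(r*m')) ≤ Real.exp (-(X/σ2*m')) := by
        apply Real.exp_le_exp.mpr
        have := mul_le_mul_of_nonneg_right hrX hm'0.le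
        linarith
      have hfin : 1 - Real.exp (-c) < 1 - Real.exp (-(r*(w-A))) := by
        calc 1 - Real.exp (-c)
            < γ * Real.exp (-(m'^2/(2*σ2))) * (1 - Real.exp (-(X/σ2 * m'))) := hXprop
          _ ≤ γ * (Real.exp (-(m'^2/(2*σ2))) * (1 - Real.exp (-(r*m')))) := by
              rw [mul_assoc]
              apply mul_le_mul_of_nonneg_left _ hγ0.le
              apply mul_le_mul_of_nonneg_left _ (Real.exp_pos _).le
              linarith
          _ ≤ 1 - Real.exp (-(r*(w-A))) := key3
      have hlt := Real.exp_lt_exp.mp (show Real.exp (-(r*(w-A))) < Real.exp (-c) by linarith)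
      show c < (w - A) * r
      nlinarith
    · -- upper bound direction
      intro c hc
      have hq : γ < 1 - Real.exp (-c) := by
        have : Real.exp (-c) < Real.exp (-(-Real.log (1-γ))) := Real.exp_lt_exp.mpr (by linarith)
        rw [hτexp] at this; linarith
      have hqpos : 0 < 1 - Real.exp (-c) := by linarith
      have hLpos : 0 < Real.log ((1 - Real.exp (-c))/γ) :=
        Real.log_pos ((one_lt_div hγ0).mpr hq)
      set L : ℝ := Real.log ((1 - Real.exp (-c))/γ) with hLdef
      set δ2 : ℝ := Real.sqrt (σ2 * L) with hδ2def
      have hδ2pos : 0 < δ2 := Real.sqrt_pos.mpr (by positivity)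
      have hminpos : 0 < min δ2 M0 := lt_min hδ2pos hM0
      filter_upwards [eventually_mem_nhdsWithin, hC 1 one_pos,
        (eventually_lt_nhds (by linarith : A < A + min δ2 M0)).filter_mono nhdsWithin_le_nhds]
        with w hw hXw hwδ
      have hAw : A < w := hTsub hw
      set θ : ℝ := Q w with hθdef
      set r : ℝ := (A - θ)/σ2 with hrdef
      have hrX : 1/σ2 ≤ r := by rw [hrdef]; gcongr
      have hrpos : 0 < r := lt_of_lt_of_le (by positivity) hrX
      have hwM : w ≤ A + M0 := by
        have := min_le_right δ2 M0; linarith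
      have hEqw := hEq w hw hAw hwM
      set P : ℝ := gaussianPDFReal θ σ2.toNNReal A with hPdef
      have hP : 0 < P := gauss_pos_s7 σ2 hσ2 θ A
      have key1 : P * Real.exp (-((w-A)^2/(2*σ2))) * ((1 - Real.exp (-(r*(w-A))))/r)
          ≤ γ * ∫ x in T, gaussianPDFReal θ σ2.toNNReal x :=
        (int_Ioc_ge σ2 hσ2 θ A w hrpos hAw.le).trans_eq hEqw
      have key2 : (∫ x in T, gaussianPDFReal θ σ2.toNNReal x) ≤ P * (1/r) :=
        le_trans (int_mono_set σ2 θ hTsub) (int_Ioi_le σ2 hσ2 θ A hrpos)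
      have hcancel : Real.exp (-((w-A)^2/(2*σ2))) * (1 - Real.exp (-(r*(w-A)))) ≤ γ := by
        have hchain : P * Real.exp (-((w-A)^2/(2*σ2))) * ((1 - Real.exp (-(r*(w-A))))/r)
            ≤ γ * (P * (1/r)) :=
          le_trans key1 (mul_le_mul_of_nonneg_left key2 hγ0.le)
        have h2 : P * Real.exp (-((w-A)^2/(2*σ2))) * ((1 - Real.exp (-(r*(w-A))))/r)
            = (Real.exp (-((w-A)^2/(2*σ2))) * (1 - Real.exp (-(r*(w-A))))) * (P * r⁻¹) := by
          rw [div_eq_mul_inv]; ring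
        have h3 : γ * (P * (1/r)) = γ * (P * r⁻¹) := by rw [one_div]
        rw [h2, h3] at hchain
        exact le_of_mul_le_mul_right hchain (by positivity)
      have hu : 1 - Real.exp (-(r*(w-A)))
          ≤ γ * Real.exp ((w-A)^2/(2*σ2)) := by
        have hee : Real.exp (-((w-A)^2/(2*σ2))) * Real.exp ((w-A)^2/(2*σ2)) = 1 := by
          rw [← Real.exp_add]; simp
        have := mul_le_mul_of_nonneg_right hcancel (Real.exp_pos ((w-A)^2/(2*σ2))).le
        calc 1 - Real.exp (-(r*(w-A)))
            = Real.exp (-((w-A)^2/(2*σ2))) * (1 - Real.exp (-(r*(w-A))))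
              * Real.exp ((w-A)^2/(2*σ2)) := by
              rw [mul_comm (Real.exp (-((w-A)^2/(2*σ2))))]
              rw [mul_assoc, hee, mul_one]
          _ ≤ γ * Real.exp ((w-A)^2/(2*σ2)) := this
      have hq2 : γ * Real.exp ((w-A)^2/(2*σ2)) < 1 - Real.exp (-c) := by
        have hh : 0 < w - A := by linarith
        have hhδ : w - A < δ2 := by
          have := min_le_left δ2 M0; linarith
        have hsq : (w-A)^2 < σ2 * L := by
          have h1 : (w-A)^2 < δ2^2 := by
            apply pow_lt_pow_left₀ hhδ hh.le
            norm_num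
          rwa [hδ2def, Real.sq_sqrt (by positivity)] at h1
        have h2 : (w-A)^2/(2*σ2) < L := by
          rw [div_lt_iff₀ (by positivity)]
          nlinarith
        have h3 : Real.exp ((w-A)^2/(2*σ2)) < Real.exp L := Real.exp_lt_exp.mpr h2
        have h4 : Real.exp L = (1 - Real.exp (-c))/γ := Real.exp_log (by positivity)
        rw [h4] at h3
        calc γ * Real.exp ((w-A)^2/(2*σ2)) < γ * ((1 - Real.exp (-c))/γ) :=
              mul_lt_mul_of_pos_left h3 hγ0
          _ = 1 - Real.exp (-c) := by field_simp
      have hfin : 1 - Real.exp (-(r*(w-A))) < 1 - Real.exp (-c) := lt_of_le_of_lt hu hq2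
      have hlt := Real.exp_lt_exp.mp (show Real.exp (-c) < Real.exp (-(r*(w-A))) by linarith)
      show (w - A) * r < c
      nlinarith
  -- final assembly
  have hsub : Tendsto (fun w : ℝ => w - A) (nhdsWithin A T) (nhds 0) := by
    have h1 : Tendsto (fun w : ℝ => w - A) (nhds A) (nhds (A - A)) :=
      (continuous_sub_right A).tendsto A
    rw [sub_self] at h1
    exact h1.mono_left nhdsWithin_le_nhds
  have hfinal := (ht.const_mul σ2).sub (hsub.mul_const A)
  have heqfun : ∀ w, σ2 * ((w - A) * ((A - Q w)/σ2)) - (w - A)*A = (A - w) * Q w := by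
    intro w; field_simp; ring
  have hgoal := hfinal.congr heqfun
  rw [show σ2 * -Real.log (1-γ) - 0*A = -(σ2 * Real.log (1-γ)) by ring] at hgoal
  exact hgoal
end

section
/- For every θ ∈ ℝ and every α ∈ (0,1), if W ~ TN(θ, ς², T), then P(L(W) ≤ θ ≤ U(W)) = 1 − α. -/
open Filter MeasureTheory ProbabilityTheory Set

open Topology
open scoped NNReal ENNReal

lemma myIntegralGPos (θ : ℝ) {σ2 : ℝ≥0} (hσ : σ2 ≠ 0) {S : Set ℝ} (hS : 0 < volume S) :
    0 < ∫ x in S, gaussianPDFReal θ σ2 x := by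
  rw [setIntegral_pos_iff_support_of_nonneg_ae
      (ae_of_all _ fun x => gaussianPDFReal_nonneg θ σ2 x)
      ((integrable_gaussianPDFReal θ σ2).integrableOn)]
  have hsupp : Function.support (gaussianPDFReal θ σ2) = Set.univ := by
    ext x; simp [Function.mem_support, (gaussianPDFReal_pos θ σ2 x hσ).ne']
  rw [hsupp, Set.univ_inter]; exact hS

lemma myMeasureToReal (θ : ℝ) {σ2 : ℝ≥0} (hσ : σ2 ≠ 0) (S : Set ℝ) :
    ((gaussianReal θ σ2) S).toReal = ∫ x in S, gaussianPDFReal θ σ2 x := by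
  rw [gaussianReal_apply_eq_integral θ hσ S,
    ENNReal.toReal_ofReal (integral_nonneg (fun x => gaussianPDFReal_nonneg θ σ2 x))]

lemma myStrictAnti (ς : ℝ) (hς : 0 < ς) (T : Set ℝ) (hTm : MeasurableSet T)
    (w l u : ℝ) (hlw : l < w) (hwu : w < u)
    (hA : Ioc l w ⊆ T) (hB : Ioo w u ⊆ T)
    {θ1 θ2 : ℝ} (h12 : θ1 < θ2) :
    truncNormalCDF ς T θ2 w < truncNormalCDF ς T θ1 w := by
  set v : ℝ := ς ^ 2 with hv
  have hvpos : 0 < v := by positivity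
  set σ2 : ℝ≥0 := Real.toNNReal v with hσ2def
  have hσ2 : σ2 ≠ 0 := by
    simp only [hσ2def, ne_eq, Real.toNNReal_eq_zero, not_le]; exact hvpos
  have hcoe : (σ2 : ℝ) = v := Real.coe_toNNReal v hvpos.le
  set g : ℝ → ℝ → ℝ := fun θ x => gaussianPDFReal θ σ2 x with hg
  set A : Set ℝ := Iic w ∩ T with hAdef
  set B : Set ℝ := Ioi w ∩ T with hBdef
  have hAm : MeasurableSet A := measurableSet_Iic.inter hTm
  have hBm : MeasurableSet B := measurableSet_Ioi.inter hTm
  have hABdisj : Disjoint A B := by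
    refine Set.disjoint_left.2 fun x hx hx' => ?_
    exact (not_lt.2 hx.1) (Set.mem_Ioi.1 hx'.1)
  have hABunion : A ∪ B = T := by
    ext x
    constructor
    · rintro (h | h) <;> exact h.2
    · intro hx
      rcases le_or_gt x w with h | h
      · exact Or.inl ⟨h, hx⟩
      · exact Or.inr ⟨h, hx⟩
  have hvolA : 0 < volume A := by
    refine lt_of_lt_of_le ?_ (measure_mono (fun x hx => ⟨le_of_lt (hx : x ∈ Ioo l w).2, hA ⟨hx.1, hx.2.le⟩⟩ : Ioo l w ⊆ A))
    rw [Real.volume_Ioo]; simp [hlw]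
  have hvolB : 0 < volume B := by
    refine lt_of_lt_of_le ?_ (measure_mono (fun x hx => ⟨(hx : x ∈ Ioo w u).1, hB hx⟩ : Ioo w u ⊆ B))
    rw [Real.volume_Ioo]; simp [hwu]
  have hint : ∀ θ (S : Set ℝ), IntegrableOn (g θ) S volume :=
    fun θ S => (integrable_gaussianPDFReal θ σ2).integrableOn
  -- the likelihood ratio
  set c : ℝ := (θ2 - θ1) / v with hc
  set d : ℝ := (θ1 ^ 2 - θ2 ^ 2) / (2 * v) with hd
  set r : ℝ → ℝ := fun x => Real.exp (c * x + d) with hr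
  have hcpos : 0 < c := div_pos (by linarith) hvpos
  have hrmono : StrictMono r := fun x y hxy => by
    apply Real.exp_lt_exp.2
    have := mul_lt_mul_of_pos_left hxy hcpos
    linarith
  have hg2 : ∀ x, g θ2 x = g θ1 x * r x := by
    intro x
    simp only [hg, gaussianPDFReal, hr]
    have key : Real.exp (-(x - θ1) ^ 2 / (2 * (σ2:ℝ))) * Real.exp (c * x + d)
        = Real.exp (-(x - θ2) ^ 2 / (2 * (σ2:ℝ))) := by
      rw [← Real.exp_add]
      congr 1
      rw [hcoe, hc, hd]
      field_simp
      ring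
    rw [mul_assoc, mul_assoc, key]
  -- integrals
  set NA1 : ℝ := ∫ x in A, g θ1 x with hNA1
  set NA2 : ℝ := ∫ x in A, g θ2 x with hNA2
  set NB1 : ℝ := ∫ x in B, g θ1 x with hNB1
  set NB2 : ℝ := ∫ x in B, g θ2 x with hNB2
  have hNA1pos : 0 < NA1 := myIntegralGPos θ1 hσ2 hvolA
  have hNA2pos : 0 < NA2 := myIntegralGPos θ2 hσ2 hvolA
  have hNB1pos : 0 < NB1 := myIntegralGPos θ1 hσ2 hvolB
  have hNB2pos : 0 < NB2 := myIntegralGPos θ2 hσ2 hvolB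
  -- key inequalities
  have hAle : NA2 ≤ r w * NA1 := by
    rw [hNA2, hNA1, ← integral_const_mul]
    refine setIntegral_mono_on ((hint θ2 A)) ?_ hAm ?_
    · exact (hint θ1 A).const_mul _
    · intro x hx
      rw [hg2 x]
      have : r x ≤ r w := hrmono.monotone hx.1
      have := gaussianPDFReal_nonneg θ1 σ2 x
      nlinarith
  have hBlt : r w * NB1 < NB2 := by
    have hpos : 0 < ∫ x in B, (g θ2 x - r w * g θ1 x) := by
      rw [setIntegral_pos_iff_support_of_nonneg_ae]
      · refine lt_of_lt_of_le ?_ (measure_mono (fun x hx => ?_ : Ioo w u ⊆ _))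
        · rw [Real.volume_Ioo]; simp [hwu]
        · have hxB : x ∈ B := ⟨hx.1, hB hx⟩
          refine ⟨?_, hxB⟩
          have : r w < r x := hrmono hx.1
          have hgp := gaussianPDFReal_pos θ1 σ2 x hσ2
          simp only [Function.mem_support, hg2 x]
          have : 0 < g θ1 x * r x - r w * g θ1 x := by nlinarith
          intro hcon
          rw [hcon] at this; exact lt_irrefl 0 this
      · refine (ae_restrict_iff' hBm).2 (ae_of_all _ fun x hx => ?_)
        have hxw : w < x := hx.1
        have : r w ≤ r x := (hrmono hxw).le
        have hgp := (gaussianPDFReal_pos θ1 σ2 x hσ2).le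
        show (0:ℝ) ≤ g θ2 x - r w * g θ1 x
        rw [hg2 x]
        nlinarith
      · exact (hint θ2 B).sub ((hint θ1 B).const_mul _)
    have := integral_sub (hint θ2 B) ((hint θ1 B).const_mul (r w))
    rw [this] at hpos
    rw [integral_const_mul] at hpos
    linarith
  -- express truncNormalCDF
  have hexpr : ∀ θ, truncNormalCDF ς T θ w =
      (∫ x in A, g θ x) / ((∫ x in A, g θ x) + (∫ x in B, g θ x)) := by
    intro θ
    rw [truncNormalCDF, myMeasureToReal θ hσ2, myMeasureToReal θ hσ2]
    congr 1
    rw [← hABunion, setIntegral_union hABdisj hBm (hint θ A) (hint θ B)]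
  rw [hexpr θ1, hexpr θ2]
  rw [div_lt_div_iff₀ (by positivity) (by positivity)]
  rw [← hNA1, ← hNA2, ← hNB1, ← hNB2]
  nlinarith [mul_le_mul_of_nonneg_right hAle hNB1pos.le, mul_lt_mul_of_pos_left hBlt hNA1pos]

section PIT
variable (ν : Measure ℝ) [IsProbabilityMeasure ν]

private noncomputable def cdfR (w : ℝ) : ℝ := (ν (Iic w)).toReal

lemma myCdfMono : Monotone (cdfR ν) := fun x y hxy =>
  ENNReal.toReal_mono (measure_ne_top ν _) (measure_mono (Iic_subset_Iic.2 hxy))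

lemma myCdfExistsLow {t : ℝ} (ht : 0 < t) : ∃ w : ℝ, cdfR ν w < t := by
  have htend : Tendsto (fun n : ℕ => ν (Iic (-(n:ℝ)))) atTop (𝓝 (ν (⋂ n : ℕ, Iic (-(n:ℝ))))) := by
    refine tendsto_measure_iInter_atTop (fun n => (measurableSet_Iic).nullMeasurableSet)
      (fun m n hmn => Iic_subset_Iic.2 (neg_le_neg (by exact_mod_cast hmn))) ⟨0, measure_ne_top _ _⟩
  have hempty : (⋂ n : ℕ, Iic (-(n:ℝ))) = ∅ := by
    ext x
    simp only [mem_iInter, mem_Iic, mem_empty_iff_false, iff_false, not_forall, not_le]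
    obtain ⟨n, hn⟩ := exists_nat_gt (-x)
    exact ⟨n, by linarith⟩
  rw [hempty, measure_empty] at htend
  have := (ENNReal.tendsto_toReal ENNReal.zero_ne_top).comp htend
  simp only [Function.comp, ENNReal.toReal_zero] at this
  obtain ⟨n, hn⟩ := (this.eventually (eventually_lt_nhds ht)).exists
  exact ⟨-(n:ℝ), hn⟩

lemma myCdfExistsHigh {t : ℝ} (ht : t < 1) : ∃ M : ℝ, ∀ w, M ≤ w → t < cdfR ν w := by
  have htend : Tendsto (fun n : ℕ => ν (Iic (n:ℝ))) atTop (𝓝 (ν (⋃ n : ℕ, Iic (n:ℝ)))) := by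
    exact tendsto_measure_iUnion_atTop (fun m n hmn => Iic_subset_Iic.2 (by exact_mod_cast hmn))
  have huniv : (⋃ n : ℕ, Iic (n:ℝ)) = univ := by
    ext x
    simp only [mem_iUnion, mem_Iic, mem_univ, iff_true]
    obtain ⟨n, hn⟩ := exists_nat_gt x
    exact ⟨n, hn.le⟩
  rw [huniv, measure_univ] at htend
  have := (ENNReal.tendsto_toReal ENNReal.one_ne_top).comp htend
  simp only [Function.comp, ENNReal.toReal_one] at this
  obtain ⟨n, hn⟩ := (this.eventually (eventually_gt_nhds ht)).exists
  refine ⟨(n:ℝ), fun w hw => lt_of_lt_of_le hn (myCdfMono ν hw)⟩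

lemma myPitLe (hcont : Continuous (cdfR ν)) {t : ℝ} (ht : t ∈ Ioo (0:ℝ) 1) :
    ν {w | cdfR ν w ≤ t} = ENNReal.ofReal t := by
  set G := cdfR ν with hG
  set S := {w | G w ≤ t} with hS
  obtain ⟨w0, hw0⟩ := myCdfExistsLow ν ht.1
  have hSne : S.Nonempty := ⟨w0, hw0.le⟩
  obtain ⟨M, hM⟩ := myCdfExistsHigh ν ht.2
  have hSbdd : BddAbove S := ⟨M, fun w hw => by
    by_contra h
    exact absurd hw (not_le.2 (hM w (le_of_not_ge h)))⟩
  set s := sSup S with hs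
  have hGs_le : G s ≤ t := by
    by_contra h
    push_neg at h
    obtain ⟨δ, hδpos, hδ⟩ := Metric.continuousAt_iff.1 hcont.continuousAt (G s - t) (by linarith)
    have hub : ∀ w ∈ S, w ≤ s - δ/2 := by
      intro w hw
      have hws : w ≤ s := le_csSup hSbdd hw
      by_contra hcon
      push_neg at hcon
      have : |w - s| < δ := by rw [abs_lt]; constructor <;> [linarith; linarith]
      have := hδ (show dist w s < δ by rwa [Real.dist_eq])
      rw [Real.dist_eq, abs_lt] at this
      have : t < G w := by linarith
      exact absurd hw (not_le.2 (by simpa using this))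
    have := csSup_le hSne hub
    linarith
  have hGs_ge : t ≤ G s := by
    by_contra h
    push_neg at h
    obtain ⟨δ, hδpos, hδ⟩ := Metric.continuousAt_iff.1 hcont.continuousAt (t - G s) (by linarith)
    have : s + δ/2 ∈ S := by
      have := hδ (show dist (s + δ/2) s < δ by rw [Real.dist_eq]; rw [abs_lt]; constructor <;> linarith)
      rw [Real.dist_eq, abs_lt] at this
      show G (s + δ/2) ≤ t
      linarith
    have := le_csSup hSbdd this
    linarith
  have hSIic : S = Iic s := by
    ext w
    constructor
    · exact fun hw => le_csSup hSbdd hw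
    · intro hw
      exact le_trans (myCdfMono ν hw) hGs_le
  rw [hSIic]
  have : (ν (Iic s)).toReal = t := le_antisymm hGs_le hGs_ge
  rw [← this, ENNReal.ofReal_toReal (measure_ne_top _ _)]

lemma myPitLt (hcont : Continuous (cdfR ν)) {t : ℝ} (ht : t ∈ Ioo (0:ℝ) 1) :
    ν {w | cdfR ν w < t} = ENNReal.ofReal t := by
  set G := cdfR ν with hG
  set S := {w | G w < t} with hS
  obtain ⟨w0, hw0⟩ := myCdfExistsLow ν ht.1
  have hSne : S.Nonempty := ⟨w0, hw0⟩
  obtain ⟨M, hM⟩ := myCdfExistsHigh ν ht.2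
  have hSbdd : BddAbove S := ⟨M, fun w hw => by
    by_contra h
    exact absurd hw (not_lt.2 (hM w (le_of_not_ge h)).le)⟩
  set s := sSup S with hs
  have hIio : Iio s ⊆ S := by
    intro w hw
    obtain ⟨w', hw'S, hww'⟩ := exists_lt_of_lt_csSup hSne hw
    exact lt_of_le_of_lt (myCdfMono ν hww'.le) hw'S
  have hSIic : S ⊆ Iic s := fun w hw => le_csSup hSbdd hw
  have hGs_le : G s ≤ t := by
    by_contra h
    push_neg at h
    obtain ⟨δ, hδpos, hδ⟩ := Metric.continuousAt_iff.1 hcont.continuousAt (G s - t) (by linarith)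
    obtain ⟨w', hw'S, hww'⟩ := exists_lt_of_lt_csSup hSne (show s - δ/2 < s by linarith)
    have hw's : w' ≤ s := hSIic hw'S
    have := hδ (show dist w' s < δ by rw [Real.dist_eq, abs_lt]; constructor <;> linarith)
    rw [Real.dist_eq, abs_lt] at this
    have : t < G w' := by linarith
    exact absurd hw'S (not_lt.2 this.le)
  have hGs_ge : t ≤ G s := by
    by_contra h
    push_neg at h
    obtain ⟨δ, hδpos, hδ⟩ := Metric.continuousAt_iff.1 hcont.continuousAt (t - G s) (by linarith)
    have : s + δ/2 ∈ S := by
      have := hδ (show dist (s + δ/2) s < δ by rw [Real.dist_eq, abs_lt]; constructor <;> linarith)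
      rw [Real.dist_eq, abs_lt] at this
      show G (s + δ/2) < t
      linarith
    have := le_csSup hSbdd this
    linarith
  have hGs : G s = t := le_antisymm hGs_le hGs_ge
  -- ν (Iio s) = ofReal t via approach from below
  have hIioEq : ν (Iio s) = ENNReal.ofReal t := by
    have htend : Tendsto (fun n : ℕ => ν (Iic (s - 1/(n+1)))) atTop (𝓝 (ν (⋃ n : ℕ, Iic (s - 1/(n+1))))) := by
      refine tendsto_measure_iUnion_atTop (fun m n hmn => Iic_subset_Iic.2 ?_)
      have : (m:ℝ) ≤ n := by exact_mod_cast hmn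
      have h1 : (1:ℝ)/(n+1) ≤ 1/(m+1) := by
        apply one_div_le_one_div_of_le <;> linarith
      linarith
    have hU : (⋃ n : ℕ, Iic (s - 1/(n+1))) = Iio s := by
      ext x
      simp only [mem_iUnion, mem_Iic, mem_Iio]
      constructor
      · rintro ⟨n, hn⟩
        have : (0:ℝ) < 1/(n+1) := by positivity
        linarith
      · intro hx
        obtain ⟨n, hn⟩ := exists_nat_gt (1/(s - x))
        refine ⟨n, ?_⟩
        have hsx : 0 < s - x := by linarith
        have hn0 : (0:ℝ) < n := lt_trans (by positivity) hn
        have : 1/(n+1) < s - x := by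
          rw [div_lt_iff₀ (by linarith)]
          rw [div_lt_iff₀ hsx] at hn
          nlinarith
        linarith
    rw [hU] at htend
    -- limit of values: ofReal (G (s - 1/(n+1))) → ofReal (G s)
    have hGtend : Tendsto (fun n : ℕ => G (s - 1/(n+1))) atTop (𝓝 (G s)) := by
      refine (hcont.tendsto s).comp ?_
      have : Tendsto (fun n : ℕ => 1/((n:ℝ)+1)) atTop (𝓝 0) := tendsto_one_div_add_atTop_nhds_zero_nat
      have := this.const_sub s
      simpa using this
    have hval : ∀ n : ℕ, ν (Iic (s - 1/(n+1))) = ENNReal.ofReal (G (s - 1/(n+1))) := fun n =>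
      (ENNReal.ofReal_toReal (measure_ne_top _ _)).symm
    have htend2 : Tendsto (fun n : ℕ => ν (Iic (s - 1/(n+1)))) atTop (𝓝 (ENNReal.ofReal t)) := by
      simp_rw [hval]
      rw [← hGs]
      exact (ENNReal.continuous_ofReal.tendsto _).comp hGtend
    exact tendsto_nhds_unique htend htend2
  have hIicEq : ν (Iic s) = ENNReal.ofReal t := by
    rw [← hGs, hG]
    exact (ENNReal.ofReal_toReal (measure_ne_top _ _)).symm
  refine le_antisymm ?_ ?_
  · rw [← hIicEq]; exact measure_mono hSIic
  · rw [← hIioEq]; exact measure_mono hIio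

end PIT

/-- For every `θ ∈ ℝ` and `α ∈ (0,1)`: if `W ~ TN(θ, ς², T)` (the normal `N(θ,ς²)`
conditioned on `{V ∈ T}`), then `P(L(W) ≤ θ ≤ U(W)) = 1 − α`, where
`L(w) = Q_{1−α/2}(w)` and `U(w) = Q_{α/2}(w)`. -/
theorem stmt_8
    (ς : ℝ) (hς : 0 < ς) (K : ℕ) (hK : 1 ≤ K) (a b : ℕ → EReal)
    (hab : ∀ i < K, a i < b i) (hba : ∀ i, i + 1 < K → b i < a (i + 1))
    (T : Set ℝ)
    (hT : T = ⋃ i ∈ Finset.range K, {x : ℝ | a i < (x : EReal) ∧ (x : EReal) < b i})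
    (θ : ℝ) (α : ℝ) (hα : α ∈ Set.Ioo (0 : ℝ) 1) (L U : ℝ → ℝ)
    (hL : ∀ w ∈ T, truncNormalCDF ς T (L w) w = 1 - α / 2)
    (hU : ∀ w ∈ T, truncNormalCDF ς T (U w) w = α / 2) :
    (((gaussianReal θ (Real.toNNReal (ς ^ 2)))[|T])
        {w : ℝ | L w ≤ θ ∧ θ ≤ U w}).toReal = 1 - α := by
  have hvpos : 0 < ς ^ 2 := by positivity
  set σ2 : ℝ≥0 := Real.toNNReal (ς ^ 2) with hσ2def
  have hσ2 : σ2 ≠ 0 := by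
    simp only [hσ2def, ne_eq, Real.toNNReal_eq_zero, not_le]; exact hvpos
  set μ : Measure ℝ := gaussianReal θ σ2 with hμdef
  -- measurability of T
  have hTo : IsOpen T := by
    rw [hT]
    refine isOpen_biUnion fun i _ => ?_
    have : {x : ℝ | a i < (x : EReal) ∧ (x : EReal) < b i}
        = (fun x : ℝ => (x : EReal)) ⁻¹' (Ioo (a i) (b i)) := rfl
    rw [this]
    exact isOpen_Ioo.preimage continuous_coe_real_ereal
  have hTm : MeasurableSet T := hTo.measurableSet
  -- neighborhoods within T
  have hnbhd : ∀ w ∈ T, ∃ l u : ℝ, l < w ∧ w < u ∧ Ioc l w ⊆ T ∧ Ioo w u ⊆ T := by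
    intro w hw
    rw [hT] at hw
    simp only [mem_iUnion, Finset.mem_range, exists_prop, mem_setOf_eq] at hw
    obtain ⟨i, hiK, haw, hwb⟩ := hw
    obtain ⟨ql, hql1, hql2⟩ := EReal.exists_rat_btwn_of_lt haw
    obtain ⟨qu, hqu1, hqu2⟩ := EReal.exists_rat_btwn_of_lt hwb
    refine ⟨(ql : ℝ), (qu : ℝ), ?_, ?_, ?_, ?_⟩
    · exact_mod_cast EReal.coe_lt_coe_iff.1 hql2
    · exact_mod_cast EReal.coe_lt_coe_iff.1 hqu1
    · intro x hx
      rw [hT]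
      simp only [mem_iUnion, Finset.mem_range, exists_prop, mem_setOf_eq]
      refine ⟨i, hiK, lt_trans hql1 ?_, lt_of_le_of_lt ?_ hwb⟩
      · exact_mod_cast hx.1
      · exact_mod_cast hx.2
    · intro x hx
      rw [hT]
      simp only [mem_iUnion, Finset.mem_range, exists_prop, mem_setOf_eq]
      refine ⟨i, hiK, lt_trans haw ?_, lt_trans ?_ hqu2⟩
      · exact_mod_cast hx.1
      · exact_mod_cast hx.2
  -- T is nonempty
  have hTne : T.Nonempty := by
    obtain ⟨q, hq1, hq2⟩ := EReal.exists_rat_btwn_of_lt (hab 0 hK)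
    refine ⟨(q : ℝ), ?_⟩
    rw [hT]
    simp only [mem_iUnion, Finset.mem_range, exists_prop, mem_setOf_eq]
    exact ⟨0, hK, hq1, hq2⟩
  -- μ T ≠ 0
  have hμT0 : μ T ≠ 0 := by
    obtain ⟨w0, hw0⟩ := hTne
    obtain ⟨l, u, hlw, hwu, hIoc, _⟩ := hnbhd w0 hw0
    have hsub : Ioc l w0 ⊆ T := hIoc
    have : 0 < μ (Ioc l w0) := by
      rw [hμdef, gaussianReal_apply_eq_integral θ hσ2]
      rw [ENNReal.ofReal_pos]
      refine myIntegralGPos θ hσ2 ?_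
      rw [Real.volume_Ioc]
      simp [hlw]
    exact fun hcon => absurd (le_antisymm (hcon ▸ measure_mono hsub) zero_le)
      (ne_of_gt this)
  have hμTfin : μ T ≠ ⊤ := measure_ne_top μ T
  set ν : Measure ℝ := μ[|T] with hνdef
  have : IsProbabilityMeasure ν := cond_isProbabilityMeasure hμT0
  -- identification of truncNormalCDF with the cdf of ν
  have hGν : ∀ w, truncNormalCDF ς T θ w = cdfR ν w := by
    intro w
    rw [truncNormalCDF, cdfR, hνdef, cond_apply hTm, ENNReal.toReal_mul, ENNReal.toReal_inv,
      Set.inter_comm T (Iic w)]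
    rw [div_eq_inv_mul]
  -- continuity of the cdf of ν
  have hcont : Continuous (cdfR ν) := by
    set f : ℝ → ℝ := T.indicator (gaussianPDFReal θ σ2) with hfdef
    have hf : Integrable f volume := (integrable_gaussianPDFReal θ σ2).indicator hTm
    have hfIic : ∀ w : ℝ, ∫ x in Iic w, f x = (μ (T ∩ Iic w)).toReal := by
      intro w
      rw [hfdef, setIntegral_indicator hTm, Set.inter_comm T (Iic w),
        myMeasureToReal θ hσ2]
    have hkey : ∀ w : ℝ, cdfR ν w
        = (μ T).toReal⁻¹ * ((∫ x in Iic (0:ℝ), f x) + ∫ x in (0:ℝ)..w, f x) := by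
      intro w
      rw [cdfR, hνdef, cond_apply hTm, ENNReal.toReal_mul, ENNReal.toReal_inv]
      congr 1
      rw [← hfIic w]
      have := intervalIntegral.integral_Iic_sub_Iic (hf.integrableOn (s := Iic (0:ℝ)))
        (hf.integrableOn (s := Iic w))
      linarith
    have : Continuous fun w : ℝ =>
        (μ T).toReal⁻¹ * ((∫ x in Iic (0:ℝ), f x) + ∫ x in (0:ℝ)..w, f x) := by
      refine continuous_const.mul (continuous_const.add ?_)
      exact intervalIntegral.continuous_primitive (fun a b => hf.intervalIntegrable) 0
    refine Continuous.congr this fun w => (hkey w).symm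
  -- strict antitonicity in the mean parameter
  have hanti : ∀ w ∈ T, StrictAnti (fun ϑ => truncNormalCDF ς T ϑ w) := by
    intro w hw
    obtain ⟨l, u, hlw, hwu, hIoc, hIoo⟩ := hnbhd w hw
    exact fun θ1 θ2 h12 => myStrictAnti ς hς T hTm w l u hlw hwu hIoc hIoo h12
  set t1 : ℝ := α / 2 with ht1def
  set t2 : ℝ := 1 - α / 2 with ht2def
  obtain ⟨hα0, hα1⟩ := hα
  have ht1 : t1 ∈ Ioo (0:ℝ) 1 := ⟨by rw [ht1def]; linarith, by rw [ht1def]; linarith⟩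
  have ht2 : t2 ∈ Ioo (0:ℝ) 1 := ⟨by rw [ht2def]; linarith, by rw [ht2def]; linarith⟩
  have ht12 : t1 ≤ t2 := by rw [ht1def, ht2def]; linarith
  -- the equivalences on T
  have hiffL : ∀ w ∈ T, (L w ≤ θ ↔ cdfR ν w ≤ t2) := by
    intro w hw
    rw [← hGν w, ← hL w hw]
    exact ((hanti w hw).le_iff_ge).symm
  have hiffU : ∀ w ∈ T, (θ ≤ U w ↔ t1 ≤ cdfR ν w) := by
    intro w hw
    rw [← hGν w, ← hU w hw]
    exact ((hanti w hw).le_iff_ge).symm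
  -- null complement
  have hνTc : ν Tᶜ = 0 := by
    rw [hνdef, cond_apply hTm, Set.inter_compl_self, measure_empty, mul_zero]
  have hinter : ∀ S : Set ℝ, ν S = ν (S ∩ T) := by
    intro S
    refine le_antisymm ?_ (measure_mono inter_subset_left)
    have h2 : ν (S \ T) ≤ ν Tᶜ := measure_mono (Set.diff_subset_compl S T)
    calc ν S ≤ ν (S ∩ T) + ν (S \ T) := measure_le_inter_add_diff ν S T
    _ ≤ ν (S ∩ T) + ν Tᶜ := add_le_add le_rfl h2
    _ = ν (S ∩ T) := by rw [hνTc, add_zero]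
  -- the two events agree on T
  set E : Set ℝ := {w : ℝ | L w ≤ θ ∧ θ ≤ U w} with hEdef
  set D : Set ℝ := {w | cdfR ν w ≤ t2} \ {w | cdfR ν w < t1} with hDdef
  have hET : E ∩ T = D ∩ T := by
    ext w
    simp only [hEdef, hDdef, mem_inter_iff, mem_setOf_eq, mem_diff, not_lt]
    constructor
    · rintro ⟨⟨h1, h2⟩, hw⟩
      exact ⟨⟨(hiffL w hw).1 h1, (hiffU w hw).1 h2⟩, hw⟩
    · rintro ⟨⟨h1, h2⟩, hw⟩
      exact ⟨⟨(hiffL w hw).2 h1, (hiffU w hw).2 h2⟩, hw⟩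
  have hνE : ν E = ν D := by
    rw [hinter E, hET, ← hinter D]
  -- compute ν D
  have hmeasLt : MeasurableSet {w | cdfR ν w < t1} :=
    (isOpen_lt hcont continuous_const).measurableSet
  have hsub : {w | cdfR ν w < t1} ⊆ {w | cdfR ν w ≤ t2} :=
    fun w hw => le_trans (le_of_lt hw) ht12
  have hνD : ν D = ENNReal.ofReal t2 - ENNReal.ofReal t1 := by
    rw [hDdef, measure_diff hsub hmeasLt.nullMeasurableSet (measure_ne_top _ _),
      myPitLe ν hcont ht2, myPitLt ν hcont ht1]
  rw [hνE, hνD, ← ENNReal.ofReal_sub _ (le_of_lt ht1.1),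
    ENNReal.toReal_ofReal (by linarith)]
  rw [ht1def, ht2def]
  ring
end
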